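/- arXiv:1809.02798 — 6 statements merged into one kernel-verified Lean document; each statement's English description precedes it below -/
import Mathlib

section
/- Let k ≥ 2, and let μ and ν be linear functionals on the Sekine algebra A_k with coefficient families (α, κ) and (β, ω) respectively, i.e. μ = Σ_{i,j∈ℤ_k} α_{i,j} d̃_{i,j} + Σ_{r,s∈ℤ_k} κ_{r,s} ẽ_{r,s} and ν = Σ_{i,j} β_{i,j} d̃_{i,j} + Σ_{r,s} ω_{r,s} ẽ_{r,s}. Then the convolution μ⋆ν := (μ⊗ν)∘Δ_k has coefficient family (γ, θ) given by γ_{i,j} = Σ_{m,n∈ℤ_k} α_{m,n} β_{i−m,j−n} + (1/k) Σ_{r,s∈ℤ_k} η^{i(r−s)} κ_{r,s} ω_{r+j,s+j} for all i,j ∈ ℤ_k, and θ_{r,s} = Σ_{i,j∈ℤ_k} η^{i(s−r)} (α_{i,j} ω_{r+j,s+j} + β_{i,j} κ_{r−j,s−j}) for all r,s ∈ ℤ_k. -/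
/-!
Statement 0: convolution of linear functionals on the Sekine algebra `A_k`.

The Sekine algebra is realized concretely as pairs `(f, X)` with
`f : ℤ_k × ℤ_k → ℂ` and `X ∈ M_k(ℂ)`.  `dEl i j` and `eEl r s` are the basis
elements `d_{i,j}` and `e_{r,s}`, `funcOf α κ` is the linear functional with
coefficient family `(α, κ)`, and the comultiplication `Δ` is hypothesized via
its defining formulas on the basis.  The conclusion states that the
convolution `(μ ⊗ ν) ∘ Δ` has coefficient family `(γ, θ)` with the asserted
formulas, i.e. its values on the basis elements are `γ_{i,j}` and `θ_{r,s}`.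
-/

open Finset
open scoped TensorProduct

noncomputable section

/-- `η^t` for `t ∈ ℤ_k`, where `η = exp(2πi/k)`. -/
def etac (k : ℕ) [NeZero k] (t : ZMod k) : ℂ :=
  Complex.exp (2 * (Real.pi : ℂ) * Complex.I * (t.val : ℂ) / (k : ℂ))

/-- The Sekine algebra `A_k = ⊕_{i,j} ℂ d_{i,j} ⊕ M_k(ℂ)`. -/
abbrev Sek (k : ℕ) := (ZMod k × ZMod k → ℂ) × Matrix (ZMod k) (ZMod k) ℂ

/-- The basis element `d_{i,j}` of the commutative part. -/
def dEl (k : ℕ) (i j : ZMod k) : Sek k := (fun x => if x = (i, j) then 1 else 0, 0)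

/-- The matrix unit `e_{r,s}` of the matrix part. -/
def eEl (k : ℕ) [NeZero k] (r s : ZMod k) : Sek k := (0, Matrix.single r s 1)

/-- The linear functional `Σ α_{i,j} d̃_{i,j} + Σ κ_{r,s} ẽ_{r,s}` with coefficient
family `(α, κ)`. -/
def funcOf (k : ℕ) [NeZero k] (α κ : ZMod k → ZMod k → ℂ) : Sek k →ₗ[ℂ] ℂ where
  toFun a := (∑ i : ZMod k, ∑ j : ZMod k, α i j * a.1 (i, j))
    + ∑ r : ZMod k, ∑ s : ZMod k, κ r s * a.2 r s
  map_add' a b := by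
    simp only [Prod.fst_add, Prod.snd_add, Pi.add_apply, Matrix.add_apply, mul_add,
      Finset.sum_add_distrib]
    ring
  map_smul' c a := by
    simp only [Prod.smul_fst, Prod.smul_snd, Pi.smul_apply, Matrix.smul_apply, smul_eq_mul,
      RingHom.id_apply, mul_add, Finset.mul_sum]
    congr 1 <;>
      exact Finset.sum_congr rfl fun _ _ => Finset.sum_congr rfl fun _ _ => by ring

lemma funcOf_dEl (k : ℕ) [NeZero k] (α κ : ZMod k → ZMod k → ℂ) (i j : ZMod k) :
    funcOf k α κ (dEl k i j) = α i j := by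
  simp only [funcOf, dEl, LinearMap.coe_mk, AddHom.coe_mk, Matrix.zero_apply, mul_zero,
    Finset.sum_const_zero, add_zero, Prod.mk.injEq, mul_ite, mul_one, ite_and]
  rw [Fintype.sum_eq_single i]
  · rw [Fintype.sum_eq_single j] <;> simp +contextual
  · intro b hb; exact Fintype.sum_eq_zero _ fun c => by simp [hb]

lemma funcOf_eEl (k : ℕ) [NeZero k] (α κ : ZMod k → ZMod k → ℂ) (r s : ZMod k) :
    funcOf k α κ (eEl k r s) = κ r s := by
  simp only [funcOf, eEl, LinearMap.coe_mk, AddHom.coe_mk, Pi.zero_apply, mul_zero,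
    Finset.sum_const_zero, zero_add, Matrix.single, Matrix.of_apply, mul_ite, mul_one,
    ite_and]
  rw [Fintype.sum_eq_single r]
  · rw [Fintype.sum_eq_single s] <;> simp +contextual [eq_comm]
  · intro b hb; exact Fintype.sum_eq_zero _ fun c => by simp [hb.symm]

theorem stmt0 (k : ℕ) [NeZero k] (hk : 2 ≤ k)
    (Δ : Sek k →ₗ[ℂ] Sek k ⊗[ℂ] Sek k)
    (hd : ∀ i j : ZMod k, Δ (dEl k i j) =
      (∑ m : ZMod k, ∑ n : ZMod k, dEl k m n ⊗ₜ[ℂ] dEl k (i - m) (j - n))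
        + (1 / (k : ℂ)) • ∑ m : ZMod k, ∑ n : ZMod k,
            etac k (i * (m - n)) • (eEl k m n ⊗ₜ[ℂ] eEl k (m + j) (n + j)))
    (he : ∀ i j : ZMod k, Δ (eEl k i j) =
      (∑ m : ZMod k, ∑ n : ZMod k,
          etac k (m * (i - j)) • (dEl k (-m) (-n) ⊗ₜ[ℂ] eEl k (i - n) (j - n)))
        + ∑ m : ZMod k, ∑ n : ZMod k,
            etac k (m * (j - i)) • (eEl k (i - n) (j - n) ⊗ₜ[ℂ] dEl k m n))
    (α κ β ω : ZMod k → ZMod k → ℂ) :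
    (∀ i j : ZMod k,
      ((TensorProduct.lid ℂ ℂ).toLinearMap ∘ₗ
          TensorProduct.map (funcOf k α κ) (funcOf k β ω) ∘ₗ Δ) (dEl k i j) =
        (∑ m : ZMod k, ∑ n : ZMod k, α m n * β (i - m) (j - n))
          + (1 / (k : ℂ)) * ∑ r : ZMod k, ∑ s : ZMod k,
              etac k (i * (r - s)) * (κ r s * ω (r + j) (s + j))) ∧
    (∀ r s : ZMod k,
      ((TensorProduct.lid ℂ ℂ).toLinearMap ∘ₗ
          TensorProduct.map (funcOf k α κ) (funcOf k β ω) ∘ₗ Δ) (eEl k r s) =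
        ∑ i : ZMod k, ∑ j : ZMod k,
          etac k (i * (s - r)) *
            (α i j * ω (r + j) (s + j) + β i j * κ (r - j) (s - j))) := by
  classical
  set G : Sek k ⊗[ℂ] Sek k →ₗ[ℂ] ℂ :=
    (TensorProduct.lid ℂ ℂ).toLinearMap ∘ₗ
      TensorProduct.map (funcOf k α κ) (funcOf k β ω) with hG
  have key : ∀ a b : Sek k, G (a ⊗ₜ[ℂ] b) = funcOf k α κ a * funcOf k β ω b := by
    intro a b
    simp [hG, TensorProduct.map_tmul, smul_eq_mul]
  constructor
  · intro i j
    have hcomp : ((TensorProduct.lid ℂ ℂ).toLinearMap ∘ₗ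
        TensorProduct.map (funcOf k α κ) (funcOf k β ω) ∘ₗ Δ) (dEl k i j)
        = G (Δ (dEl k i j)) := rfl
    rw [hcomp, hd, map_add, map_smul]
    simp only [map_sum, map_smul, key, funcOf_dEl, funcOf_eEl, smul_eq_mul]
  · intro r s
    have hcomp : ((TensorProduct.lid ℂ ℂ).toLinearMap ∘ₗ
        TensorProduct.map (funcOf k α κ) (funcOf k β ω) ∘ₗ Δ) (eEl k r s)
        = G (Δ (eEl k r s)) := rfl
    rw [hcomp, he, map_add]
    simp only [map_sum, map_smul, key, funcOf_dEl, funcOf_eEl, smul_eq_mul]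
    have hsplit : (∑ i : ZMod k, ∑ j : ZMod k,
        etac k (i * (s - r)) * (α i j * ω (r + j) (s + j) + β i j * κ (r - j) (s - j)))
        = (∑ i : ZMod k, ∑ j : ZMod k, etac k (i * (s - r)) * (α i j * ω (r + j) (s + j)))
          + ∑ i : ZMod k, ∑ j : ZMod k, etac k (i * (s - r)) * (β i j * κ (r - j) (s - j)) := by
      simp [mul_add, Finset.sum_add_distrib]
    rw [hsplit]
    congr 1
    · refine Fintype.sum_equiv (Equiv.neg (ZMod k)) _ _ fun m => ?_
      refine Fintype.sum_equiv (Equiv.neg (ZMod k)) _ _ fun n => ?_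
      have h1 : (m * (r - s) : ZMod k) = (-m) * (s - r) := by ring
      have h2 : (r - n : ZMod k) = r + -n := by ring
      have h3 : (s - n : ZMod k) = s + -n := by ring
      rw [h1, h2, h3]
      simp [Equiv.neg_apply]
    · refine Finset.sum_congr rfl fun m _ => Finset.sum_congr rfl fun n _ => ?_
      ring
end
end

section
/- Let k ≥ 2 and let μ be a linear functional on the Sekine algebra A_k with coefficient family (α, κ). Then μ is an idempotent state on (A_k, Δ_k) — i.e. μ(1) = 1, μ(a*a) ≥ 0 for all a ∈ A_k, and (μ⊗μ)∘Δ_k = μ — if and only if: every α_{i,j} is a nonnegative real number, the matrix K = [κ_{r,s}]_{r,s∈ℤ_k} is positive semidefinite, and the following equations hold: (A) α_{i,j} = Σ_{r,s∈ℤ_k} α_{i−r,j−s} α_{r,s} + (1/k) Σ_{r,s∈ℤ_k} η^{i(r−s)} κ_{r,s} κ_{r+j,s+j} for all i,j ∈ ℤ_k; (B) κ_{r,s} = Σ_{i,j∈ℤ_k} η^{i(s−r)} α_{i,j} (κ_{r+j,s+j} + κ_{r−j,s−j}) for all r,s ∈ ℤ_k; (C) Σ_{i,j∈ℤ_k} α_{i,j}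 + Σ_{r∈ℤ_k} κ_{r,r} = 1. -/
/-!
Statement 1: a linear functional `μ` with coefficient family `(α, κ)` on the
Sekine algebra is an idempotent state (i.e. `μ(1) = 1`, `μ(a⋆a) ≥ 0` for all
`a`, and `(μ ⊗ μ) ∘ Δ = μ`) if and only if all `α_{i,j}` are nonnegative
reals, `K = [κ_{r,s}]` is positive semidefinite, and equations (A), (B), (C)
hold.  The comultiplication `Δ` is hypothesized via its defining formulas on
the basis.  The order `0 ≤ ·` on `ℂ` (scoped `ComplexOrder`) expresses
"nonnegative real".
-/

open Finset
open scoped TensorProduct ComplexOrder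

noncomputable section

section AuxSek
open Matrix

variable {k : ℕ} [NeZero k] (α κ : ZMod k → ZMod k → ℂ)

lemma funcOf_apply (a : Sek k) : funcOf k α κ a =
    (∑ i : ZMod k, ∑ j : ZMod k, α i j * a.1 (i, j))
    + ∑ r : ZMod k, ∑ s : ZMod k, κ r s * a.2 r s := rfl

lemma funcOf_d (i j : ZMod k) : funcOf k α κ (dEl k i j) = α i j := by
  simp [funcOf_apply, dEl, Prod.ext_iff, ite_and, mul_ite, Finset.sum_ite_eq']

lemma funcOf_e (r s : ZMod k) : funcOf k α κ (eEl k r s) = κ r s := by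
  simp [funcOf_apply, eEl, Matrix.single, Matrix.of_apply, ite_and, mul_ite, Finset.sum_ite_eq']

lemma funcOf_one : funcOf k α κ 1 =
    (∑ i : ZMod k, ∑ j : ZMod k, α i j) + ∑ r : ZMod k, κ r r := by
  simp [funcOf_apply, Prod.fst_one, Prod.snd_one, Matrix.one_apply, mul_ite, Finset.sum_ite_eq']

lemma quad_expand {k : ℕ} [NeZero k] (M : Matrix (ZMod k) (ZMod k) ℂ) (r s : ZMod k)
    (c d : ℂ) (x : ZMod k → ℂ)
    (hx : x = fun t => (if t = r then c else 0) + (if t = s then d else 0)) :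
    star x ⬝ᵥ (M *ᵥ x) =
    star c * (M r r * c) + star c * (M r s * d) + (star d * (M s r * c) + star d * (M s s * d)) := by
  subst hx
  have h1 : ∀ a : ZMod k, (M *ᵥ fun t => (if t = r then c else 0) + (if t = s then d else 0)) a
      = M a r * c + M a s * d := by
    intro a
    simp [Matrix.mulVec, dotProduct, mul_add, Finset.sum_add_distrib, mul_ite,
      Finset.sum_ite_eq']
  simp only [dotProduct, h1, Pi.star_apply]
  simp [star_add, apply_ite (starRingEnd ℂ), add_mul, ite_mul, zero_mul,
    Finset.sum_add_distrib, Finset.sum_ite_eq']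
  ring

lemma isHermitian_of_quad {k : ℕ} [NeZero k] (M : Matrix (ZMod k) (ZMod k) ℂ)
    (h : ∀ x : ZMod k → ℂ, 0 ≤ star x ⬝ᵥ (M *ᵥ x)) : M.IsHermitian := by
  have key : ∀ (r s : ZMod k) (c d : ℂ), 0 ≤ star c * (M r r * c) + star c * (M r s * d)
      + (star d * (M s r * c) + star d * (M s s * d)) := by
    intro r s c d
    have := h (fun t => (if t = r then c else 0) + (if t = s then d else 0))
    rwa [quad_expand M r s c d _ rfl] at this
  have diag : ∀ r : ZMod k, (M r r).im = 0 := by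
    intro r
    have h0 := key r r 1 0
    simp only [star_one, one_mul, mul_one, star_zero, zero_mul, mul_zero, add_zero] at h0
    have := (Complex.nonneg_iff.mp h0).2
    simpa using this.symm
  ext r s
  have h1 := (Complex.nonneg_iff.mp (key r s 1 1)).2
  have h2 := (Complex.nonneg_iff.mp (key r s 1 Complex.I)).2
  simp only [star_one, one_mul, mul_one, Complex.star_def, Complex.conj_I] at h1 h2
  simp only [Matrix.conjTranspose_apply, Complex.star_def]
  apply Complex.ext
  · simp only [Complex.conj_re]
    simp only [Complex.add_im, Complex.mul_im, Complex.I_re, Complex.I_im, Complex.neg_re,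
      Complex.neg_im, Complex.mul_re] at h1 h2
    have dr := diag r; have ds := diag s
    linarith
  · simp only [Complex.conj_im]
    simp only [Complex.add_im, Complex.mul_im, Complex.I_re, Complex.I_im, Complex.neg_re,
      Complex.neg_im, Complex.mul_re] at h1 h2
    have dr := diag r; have ds := diag s
    linarith

variable {k : ℕ} [NeZero k] {α κ : ZMod k → ZMod k → ℂ}

lemma funcOf_star_mul (a : Sek k) : funcOf k α κ (star a * a) =
    (∑ i : ZMod k, ∑ j : ZMod k, α i j * (star (a.1 (i, j)) * a.1 (i, j)))
    + ∑ r : ZMod k, ∑ s : ZMod k, κ r s * ∑ t : ZMod k, star (a.2 t r) * a.2 t s := by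
  simp [funcOf_apply, Prod.fst_mul, Prod.snd_mul, Prod.fst_star, Prod.snd_star,
    Pi.mul_apply, Pi.star_apply, Matrix.mul_apply, Matrix.conjTranspose_apply]

lemma quadform (κ : ZMod k → ZMod k → ℂ) (x : ZMod k → ℂ) :
    star x ⬝ᵥ ((Matrix.of κ) *ᵥ x) = ∑ r : ZMod k, ∑ s : ZMod k, κ r s * (star (x r) * x s) := by
  simp only [dotProduct, Matrix.mulVec, Pi.star_apply, Matrix.of_apply, Finset.mul_sum]
  exact Finset.sum_congr rfl fun r _ => Finset.sum_congr rfl fun s _ => by ring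

lemma pos_iff : (∀ a : Sek k, 0 ≤ funcOf k α κ (star a * a)) ↔
    ((∀ i j : ZMod k, 0 ≤ α i j) ∧ (Matrix.of κ).PosSemidef) := by
  constructor
  · intro hpos
    have hquad : ∀ x : ZMod k → ℂ, 0 ≤ star x ⬝ᵥ ((Matrix.of κ) *ᵥ x) := by
      intro x
      have := hpos (0, Matrix.of fun t u => if t = 0 then x u else 0)
      rw [funcOf_star_mul] at this
      simp only [Matrix.of_apply, apply_ite (star : ℂ → ℂ), star_zero, ite_mul, zero_mul,
        mul_ite, mul_zero, Finset.sum_ite_eq', Finset.mem_univ, if_true, Pi.zero_apply,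
        mul_zero, Finset.sum_const_zero, zero_add] at this
      rw [quadform]
      simpa using this
    refine ⟨fun i j => ?_, .of_dotProduct_mulVec_nonneg (isHermitian_of_quad _ hquad) hquad⟩
    have hdd : star (dEl k i j) * dEl k i j = dEl k i j := by
      refine Prod.ext ?_ ?_
      · funext x
        by_cases h : x = (i, j) <;> simp [dEl, Prod.fst_mul, Prod.fst_star, h]
      · simp [dEl, Prod.snd_mul, Prod.snd_star]
    have := hpos (dEl k i j)
    rwa [hdd, funcOf_d] at this
  · rintro ⟨hα, hK⟩ a
    rw [funcOf_star_mul]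
    apply add_nonneg
    · exact Finset.sum_nonneg fun i _ => Finset.sum_nonneg fun j _ =>
        mul_nonneg (hα i j) (star_mul_self_nonneg _)
    · have key : ∑ r : ZMod k, ∑ s : ZMod k, κ r s * ∑ t : ZMod k, star (a.2 t r) * a.2 t s
          = ∑ t : ZMod k, star (fun u => a.2 t u) ⬝ᵥ ((Matrix.of κ) *ᵥ (fun u => a.2 t u)) := by
        simp only [quadform, Finset.mul_sum]
        exact (Finset.sum_congr rfl fun r _ => Finset.sum_comm).trans Finset.sum_comm
      rw [key]
      exact Finset.sum_nonneg fun t _ => hK.dotProduct_mulVec_nonneg _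

lemma sek_decomp (a : Sek k) :
    a = (∑ i : ZMod k, ∑ j : ZMod k, a.1 (i, j) • dEl k i j)
      + ∑ r : ZMod k, ∑ s : ZMod k, a.2 r s • eEl k r s := by
  have h1 : ∀ (f : ZMod k → Sek k), (∑ x : ZMod k, f x).1 = ∑ x : ZMod k, (f x).1 :=
    fun f => map_sum (LinearMap.fst ℂ _ _) f univ
  have h2 : ∀ (f : ZMod k → Sek k), (∑ x : ZMod k, f x).2 = ∑ x : ZMod k, (f x).2 :=
    fun f => map_sum (LinearMap.snd ℂ _ _) f univ
  refine Prod.ext ?_ ?_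
  · funext x
    simp only [Prod.fst_add, h1, dEl, eEl, Prod.smul_fst, smul_zero, Finset.sum_const_zero,
      add_zero, Finset.sum_apply, Pi.smul_apply, smul_eq_mul, mul_ite, mul_one, mul_zero,
      Pi.zero_apply]
    simp [Prod.ext_iff, ite_and, Finset.sum_ite_eq, Finset.sum_ite_eq']
  · simp only [Prod.snd_add, h2, dEl, eEl, Prod.smul_snd, smul_zero, Finset.sum_const_zero,
      zero_add]
    refine (Matrix.matrix_eq_sum_single a.2).trans ?_
    exact Finset.sum_congr rfl fun r _ => Finset.sum_congr rfl fun s _ => by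
      rw [Matrix.smul_single, smul_eq_mul, mul_one]

section comp
variable (Δ : Sek k →ₗ[ℂ] Sek k ⊗[ℂ] Sek k) (α κ : ZMod k → ZMod k → ℂ)

lemma comp_d (i j : ZMod k)
    (hd : Δ (dEl k i j) =
      (∑ m : ZMod k, ∑ n : ZMod k, dEl k m n ⊗ₜ[ℂ] dEl k (i - m) (j - n))
        + (1 / (k : ℂ)) • ∑ m : ZMod k, ∑ n : ZMod k,
            etac k (i * (m - n)) • (eEl k m n ⊗ₜ[ℂ] eEl k (m + j) (n + j))) :
    ((TensorProduct.lid ℂ ℂ).toLinearMap ∘ₗ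
        TensorProduct.map (funcOf k α κ) (funcOf k α κ) ∘ₗ Δ) (dEl k i j)
      = (∑ m : ZMod k, ∑ n : ZMod k, α m n * α (i - m) (j - n))
        + (1 / (k : ℂ)) * ∑ m : ZMod k, ∑ n : ZMod k,
            etac k (i * (m - n)) * (κ m n * κ (m + j) (n + j)) := by
  simp only [LinearMap.comp_apply, hd, map_add, _root_.map_smul, map_sum, TensorProduct.map_tmul,
    LinearEquiv.coe_coe, TensorProduct.lid_tmul, funcOf_d, funcOf_e, smul_eq_mul]

lemma comp_e (i j : ZMod k)
    (he : Δ (eEl k i j) =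
      (∑ m : ZMod k, ∑ n : ZMod k,
          etac k (m * (i - j)) • (dEl k (-m) (-n) ⊗ₜ[ℂ] eEl k (i - n) (j - n)))
        + ∑ m : ZMod k, ∑ n : ZMod k,
            etac k (m * (j - i)) • (eEl k (i - n) (j - n) ⊗ₜ[ℂ] dEl k m n)) :
    ((TensorProduct.lid ℂ ℂ).toLinearMap ∘ₗ
        TensorProduct.map (funcOf k α κ) (funcOf k α κ) ∘ₗ Δ) (eEl k i j)
      = (∑ m : ZMod k, ∑ n : ZMod k, etac k (m * (i - j)) * (α (-m) (-n) * κ (i - n) (j - n)))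
        + ∑ m : ZMod k, ∑ n : ZMod k, etac k (m * (j - i)) * (κ (i - n) (j - n) * α m n) := by
  simp only [LinearMap.comp_apply, he, map_add, _root_.map_smul, map_sum, TensorProduct.map_tmul,
    LinearEquiv.coe_coe, TensorProduct.lid_tmul, funcOf_d, funcOf_e, smul_eq_mul]

end comp

lemma sum_neg_reindex (f : ZMod k → ZMod k → ℂ) :
    ∑ m : ZMod k, ∑ n : ZMod k, f m n = ∑ m : ZMod k, ∑ n : ZMod k, f (-m) (-n) :=
  Fintype.sum_equiv (Equiv.neg (ZMod k)) _ _ fun m =>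
    Fintype.sum_equiv (Equiv.neg (ZMod k)) _ _ fun n => by simp [Equiv.neg_apply]

lemma eqB_equiv (α κ : ZMod k → ZMod k → ℂ) (r s : ZMod k) :
    (∑ m : ZMod k, ∑ n : ZMod k, etac k (m * (r - s)) * (α (-m) (-n) * κ (r - n) (s - n)))
      + ∑ m : ZMod k, ∑ n : ZMod k, etac k (m * (s - r)) * (κ (r - n) (s - n) * α m n)
    = ∑ m : ZMod k, ∑ n : ZMod k,
        etac k (m * (s - r)) * α m n * (κ (r + n) (s + n) + κ (r - n) (s - n)) := by
  have h1 : (∑ m : ZMod k, ∑ n : ZMod k, etac k (m * (r - s)) * (α (-m) (-n) * κ (r - n) (s - n)))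
      = ∑ m : ZMod k, ∑ n : ZMod k, etac k (m * (s - r)) * (α m n * κ (r + n) (s + n)) := by
    rw [sum_neg_reindex (fun m n => etac k (m * (r - s)) * (α (-m) (-n) * κ (r - n) (s - n)))]
    refine Finset.sum_congr rfl fun m _ => Finset.sum_congr rfl fun n _ => ?_
    have : -m * (r - s) = m * (s - r) := by ring
    rw [this, neg_neg, neg_neg, sub_neg_eq_add, sub_neg_eq_add]
  rw [h1, ← Finset.sum_add_distrib]
  refine Finset.sum_congr rfl fun m _ => ?_
  rw [← Finset.sum_add_distrib]
  exact Finset.sum_congr rfl fun n _ => by ring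


end AuxSek

open Matrix in
theorem stmt1 (k : ℕ) [NeZero k] (hk : 2 ≤ k)
    (Δ : Sek k →ₗ[ℂ] Sek k ⊗[ℂ] Sek k)
    (hd : ∀ i j : ZMod k, Δ (dEl k i j) =
      (∑ m : ZMod k, ∑ n : ZMod k, dEl k m n ⊗ₜ[ℂ] dEl k (i - m) (j - n))
        + (1 / (k : ℂ)) • ∑ m : ZMod k, ∑ n : ZMod k,
            etac k (i * (m - n)) • (eEl k m n ⊗ₜ[ℂ] eEl k (m + j) (n + j)))
    (he : ∀ i j : ZMod k, Δ (eEl k i j) =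
      (∑ m : ZMod k, ∑ n : ZMod k,
          etac k (m * (i - j)) • (dEl k (-m) (-n) ⊗ₜ[ℂ] eEl k (i - n) (j - n)))
        + ∑ m : ZMod k, ∑ n : ZMod k,
            etac k (m * (j - i)) • (eEl k (i - n) (j - n) ⊗ₜ[ℂ] dEl k m n))
    (α κ : ZMod k → ZMod k → ℂ) :
    -- `μ = funcOf k α κ` is an idempotent state
    (funcOf k α κ 1 = 1 ∧
      (∀ a : Sek k, 0 ≤ funcOf k α κ (star a * a)) ∧
      (TensorProduct.lid ℂ ℂ).toLinearMap ∘ₗ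
          TensorProduct.map (funcOf k α κ) (funcOf k α κ) ∘ₗ Δ = funcOf k α κ)
    ↔
    -- the coefficient conditions
    ((∀ i j : ZMod k, 0 ≤ α i j) ∧
      (Matrix.of κ).PosSemidef ∧
      (∀ i j : ZMod k, α i j =
          (∑ r : ZMod k, ∑ s : ZMod k, α (i - r) (j - s) * α r s)
            + (1 / (k : ℂ)) * ∑ r : ZMod k, ∑ s : ZMod k,
                etac k (i * (r - s)) * (κ r s * κ (r + j) (s + j))) ∧
      (∀ r s : ZMod k, κ r s =
          ∑ i : ZMod k, ∑ j : ZMod k,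
            etac k (i * (s - r)) * α i j * (κ (r + j) (s + j) + κ (r - j) (s - j))) ∧
      ((∑ i : ZMod k, ∑ j : ZMod k, α i j) + ∑ r : ZMod k, κ r r = 1)) := by
  have sumA : ∀ i j : ZMod k,
      (∑ m : ZMod k, ∑ n : ZMod k, α m n * α (i - m) (j - n))
        = ∑ r : ZMod k, ∑ s : ZMod k, α (i - r) (j - s) * α r s :=
    fun i j => Finset.sum_congr rfl fun m _ => Finset.sum_congr rfl fun n _ => mul_comm _ _
  have hdval : ∀ i j : ZMod k,
      ((TensorProduct.lid ℂ ℂ).toLinearMap ∘ₗ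
        TensorProduct.map (funcOf k α κ) (funcOf k α κ) ∘ₗ Δ) (dEl k i j)
      = (∑ r : ZMod k, ∑ s : ZMod k, α (i - r) (j - s) * α r s)
        + (1 / (k : ℂ)) * ∑ r : ZMod k, ∑ s : ZMod k,
            etac k (i * (r - s)) * (κ r s * κ (r + j) (s + j)) := by
    intro i j
    rw [comp_d Δ α κ i j (hd i j), sumA i j]
  have heval : ∀ r s : ZMod k,
      ((TensorProduct.lid ℂ ℂ).toLinearMap ∘ₗ
        TensorProduct.map (funcOf k α κ) (funcOf k α κ) ∘ₗ Δ) (eEl k r s)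
      = ∑ i : ZMod k, ∑ j : ZMod k,
            etac k (i * (s - r)) * α i j * (κ (r + j) (s + j) + κ (r - j) (s - j)) := by
    intro r s
    rw [comp_e Δ α κ r s (he r s), eqB_equiv α κ r s]
  constructor
  · rintro ⟨h1, h2, h3⟩
    refine ⟨(pos_iff.mp h2).1, (pos_iff.mp h2).2, ?_, ?_, ?_⟩
    · intro i j
      have := LinearMap.congr_fun h3 (dEl k i j)
      rw [hdval i j, funcOf_d] at this
      exact this.symm
    · intro r s
      have := LinearMap.congr_fun h3 (eEl k r s)
      rw [heval r s, funcOf_e] at this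
      exact this.symm
    · rwa [funcOf_one] at h1
  · rintro ⟨hα, hK, hA, hB, hC⟩
    refine ⟨by rw [funcOf_one]; exact hC, pos_iff.mpr ⟨hα, hK⟩, ?_⟩
    apply LinearMap.ext
    intro a
    conv_lhs => rw [sek_decomp a]
    conv_rhs => rw [sek_decomp a]
    simp only [map_add, map_sum, _root_.map_smul]
    congr 1
    · exact Finset.sum_congr rfl fun i _ => Finset.sum_congr rfl fun j _ => by
        rw [hdval i j, funcOf_d, ← hA i j]
    · exact Finset.sum_congr rfl fun r _ => Finset.sum_congr rfl fun s _ => by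
        rw [heval r s, funcOf_e, ← hB r s]
end
end

section
/- Let k ≥ 2 and let (α, κ) be an idempotent state system on the Sekine quantum group A_k. Then exactly one of the following two alternatives holds: either Σ_{i,j∈ℤ_k} α_{i,j} = 1 and Σ_{r∈ℤ_k} κ_{r,r} = 0, or Σ_{i,j∈ℤ_k} α_{i,j} = Σ_{r∈ℤ_k} κ_{r,r} = 1/2. -/
/-! Statement 2: for any idempotent state system on the Sekine quantum group,
exactly one of the two alternatives `Σα = 1 ∧ Tr K = 0` and `Σα = Tr K = 1/2` holds. -/

open Finset
open scoped ComplexOrder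

noncomputable section

/-- An *idempotent state system* on the Sekine quantum group `A_k`: the
coefficients `α_{i,j}` are nonnegative reals (expressed via the order on `ℂ`),
the matrix `K = [κ_{r,s}]` is positive semidefinite, and the equations (A),
(B), (C) hold. -/
def IdemSystem (k : ℕ) [NeZero k] (α κ : ZMod k → ZMod k → ℂ) : Prop :=
  (∀ i j : ZMod k, 0 ≤ α i j) ∧
  (Matrix.of κ).PosSemidef ∧
  (∀ i j : ZMod k, α i j =
      (∑ r : ZMod k, ∑ s : ZMod k, α (i - r) (j - s) * α r s)
        + (1 / (k : ℂ)) * ∑ r : ZMod k, ∑ s : ZMod k,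
            etac k (i * (r - s)) * (κ r s * κ (r + j) (s + j))) ∧
  (∀ r s : ZMod k, κ r s =
      ∑ i : ZMod k, ∑ j : ZMod k,
        etac k (i * (s - r)) * α i j * (κ (r + j) (s + j) + κ (r - j) (s - j))) ∧
  ((∑ i : ZMod k, ∑ j : ZMod k, α i j) + ∑ r : ZMod k, κ r r = 1)

/-- `etac` as a power of the primitive root `exp(2πi/k)`. -/
lemma etac_eq_pow (k : ℕ) [NeZero k] (t : ZMod k) :
    etac k t = Complex.exp (2 * Real.pi * Complex.I / k) ^ t.val := by
  rw [etac, ← Complex.exp_nat_mul]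
  congr 1
  ring

/-- Reindexing a sum over `ZMod k` by `ZMod.val`. -/
lemma sum_zmod_val {k : ℕ} [NeZero k] (f : ℕ → ℂ) :
    ∑ i : ZMod k, f i.val = ∑ n ∈ Finset.range k, f n := by
  refine Finset.sum_nbij' (fun i => i.val) (fun n => (n : ZMod k)) ?_ ?_ ?_ ?_
      (fun i _ => rfl)
  all_goals intro a ha
  all_goals first
    | exact Finset.mem_range.mpr (ZMod.val_lt _)
    | exact Finset.mem_univ _
    | exact ZMod.natCast_zmod_val _
    | exact ZMod.val_natCast_of_lt (Finset.mem_range.mp ha)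

/-- Character orthogonality: `∑_i η^{i c} = k` if `c = 0`, else `0`. -/
lemma sum_etac (k : ℕ) [NeZero k] (hk : 2 ≤ k) (c : ZMod k) :
    ∑ i : ZMod k, etac k (i * c) = if c = 0 then (k : ℂ) else 0 := by
  set ζ := Complex.exp (2 * Real.pi * Complex.I / k) with hζ
  have hprim : IsPrimitiveRoot ζ k := Complex.isPrimitiveRoot_exp k (NeZero.ne k)
  have hζk : ζ ^ k = 1 := hprim.pow_eq_one
  have hstep : ∀ i : ZMod k, etac k (i * c) = (ζ ^ c.val) ^ i.val := by
    intro i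
    rw [etac_eq_pow, ZMod.val_mul, ← pow_eq_pow_mod _ hζk, mul_comm i.val, pow_mul]
  rw [Finset.sum_congr rfl fun i _ => hstep i]
  rw [show (∑ i : ZMod k, (ζ ^ c.val) ^ i.val) = ∑ n ∈ Finset.range k, (ζ ^ c.val) ^ n from
    sum_zmod_val _]
  by_cases hc : c = 0
  · simp [hc]
  · rw [if_neg hc]
    have hv : 0 < c.val := by
      rcases Nat.eq_zero_or_pos c.val with h0 | h0
      · exact absurd (by rwa [← ZMod.val_eq_zero]) hc
      · exact h0
    have hne : ζ ^ c.val ≠ 1 := hprim.pow_ne_one_of_pos_of_lt hv.ne' (ZMod.val_lt c)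
    have hpow : (ζ ^ c.val) ^ k = 1 := by
      rw [← pow_mul, mul_comm, pow_mul, hζk, one_pow]
    have hgs := geom_sum_mul (ζ ^ c.val) k
    rw [hpow, sub_self] at hgs
    exact (mul_eq_zero.mp hgs).resolve_right (sub_ne_zero.mpr hne)

private lemma swap4 {M : Type*} [AddCommMonoid M] {n : ℕ} [NeZero n]
    (f : ZMod n → ZMod n → ZMod n → ZMod n → M) :
    ∑ i : ZMod n, ∑ j : ZMod n, ∑ r : ZMod n, ∑ s : ZMod n, f i j r s
      = ∑ r : ZMod n, ∑ s : ZMod n, ∑ i : ZMod n, ∑ j : ZMod n, f i j r s := by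
  calc ∑ i : ZMod n, ∑ j : ZMod n, ∑ r : ZMod n, ∑ s : ZMod n, f i j r s
      = ∑ i : ZMod n, ∑ r : ZMod n, ∑ s : ZMod n, ∑ j : ZMod n, f i j r s := by
        refine Finset.sum_congr rfl fun i _ => ?_
        rw [Finset.sum_comm]
        exact Finset.sum_congr rfl fun r _ => Finset.sum_comm
    _ = ∑ r : ZMod n, ∑ i : ZMod n, ∑ s : ZMod n, ∑ j : ZMod n, f i j r s :=
        Finset.sum_comm
    _ = ∑ r : ZMod n, ∑ s : ZMod n, ∑ i : ZMod n, ∑ j : ZMod n, f i j r s :=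
        Finset.sum_congr rfl fun r _ => Finset.sum_comm

theorem stmt2 (k : ℕ) [NeZero k] (hk : 2 ≤ k) (α κ : ZMod k → ZMod k → ℂ)
    (h : IdemSystem k α κ) :
    Xor'
      ((∑ i : ZMod k, ∑ j : ZMod k, α i j) = 1 ∧ (∑ r : ZMod k, κ r r) = 0)
      ((∑ i : ZMod k, ∑ j : ZMod k, α i j) = 1 / 2 ∧ (∑ r : ZMod k, κ r r) = 1 / 2) := by
  obtain ⟨hpos, hpsd, hA, hB, hC⟩ := h
  set A : ℂ := ∑ i : ZMod k, ∑ j : ZMod k, α i j with hAdef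
  set T : ℂ := ∑ r : ZMod k, κ r r with hTdef
  have hkC : (k : ℂ) ≠ 0 := Nat.cast_ne_zero.mpr (NeZero.ne k)
  -- sum equation (A) over all i, j
  have term1 : (∑ i : ZMod k, ∑ j : ZMod k, ∑ r : ZMod k, ∑ s : ZMod k,
      α (i - r) (j - s) * α r s) = A * A := by
    rw [swap4]
    have inner : ∀ r s : ZMod k,
        (∑ i : ZMod k, ∑ j : ZMod k, α (i - r) (j - s) * α r s) = A * α r s := by
      intro r s
      have e1 : (∑ i : ZMod k, ∑ j : ZMod k, α (i - r) (j - s))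
          = A := by
        rw [hAdef]
        refine Fintype.sum_equiv (Equiv.subRight r) _ _ fun i => ?_
        exact Fintype.sum_equiv (Equiv.subRight s) _ _ fun j => rfl
      calc (∑ i : ZMod k, ∑ j : ZMod k, α (i - r) (j - s) * α r s)
          = (∑ i : ZMod k, ∑ j : ZMod k, α (i - r) (j - s)) * α r s := by
            rw [Finset.sum_mul]
            exact Finset.sum_congr rfl fun i _ => (Finset.sum_mul _ _ _).symm
        _ = A * α r s := by rw [e1]
    calc (∑ r : ZMod k, ∑ s : ZMod k, ∑ i : ZMod k, ∑ j : ZMod k,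
          α (i - r) (j - s) * α r s)
        = ∑ r : ZMod k, ∑ s : ZMod k, A * α r s :=
          Finset.sum_congr rfl fun r _ => Finset.sum_congr rfl fun s _ => inner r s
      _ = A * A := by
          rw [show (∑ r : ZMod k, ∑ s : ZMod k, A * α r s)
              = ∑ r : ZMod k, A * ∑ s : ZMod k, α r s from
            Finset.sum_congr rfl fun r _ => (Finset.mul_sum _ _ _).symm,
            ← Finset.mul_sum, ← hAdef]
  have term2 : (∑ i : ZMod k, ∑ j : ZMod k, ∑ r : ZMod k, ∑ s : ZMod k,
      etac k (i * (r - s)) * (κ r s * κ (r + j) (s + j))) = (k : ℂ) * (T * T) := by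
    rw [swap4]
    have inner : ∀ r s : ZMod k,
        (∑ i : ZMod k, ∑ j : ZMod k, etac k (i * (r - s)) * (κ r s * κ (r + j) (s + j)))
          = (if r = s then (k : ℂ) else 0) * ∑ j : ZMod k, κ r s * κ (r + j) (s + j) := by
      intro r s
      rw [← Finset.sum_mul_sum, sum_etac k hk (r - s)]
      simp only [sub_eq_zero]
    have diag : ∀ r : ZMod k, (∑ j : ZMod k, κ r r * κ (r + j) (r + j)) = κ r r * T := by
      intro r
      rw [← Finset.mul_sum, hTdef]
      congr 1
      exact Fintype.sum_equiv (Equiv.addLeft r) _ _ fun j => rfl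
    calc (∑ r : ZMod k, ∑ s : ZMod k, ∑ i : ZMod k, ∑ j : ZMod k,
          etac k (i * (r - s)) * (κ r s * κ (r + j) (s + j)))
        = ∑ r : ZMod k, ∑ s : ZMod k,
            (if r = s then (k : ℂ) else 0) * ∑ j : ZMod k, κ r s * κ (r + j) (s + j) :=
          Finset.sum_congr rfl fun r _ => Finset.sum_congr rfl fun s _ => inner r s
      _ = ∑ r : ZMod k, (k : ℂ) * (κ r r * T) := by
          refine Finset.sum_congr rfl fun r _ => ?_
          rw [Finset.sum_eq_single r]
          · rw [if_pos rfl, diag r]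
          · intro s _ hs; rw [if_neg (Ne.symm hs), zero_mul]
          · intro hr; exact absurd (Finset.mem_univ r) hr
      _ = (k : ℂ) * (T * T) := by
          rw [← Finset.mul_sum]
          congr 1
          rw [← Finset.sum_mul, ← hTdef]
  have key : A = A * A + T * T := by
    have hsum : A = (∑ i : ZMod k, ∑ j : ZMod k,
        ((∑ r : ZMod k, ∑ s : ZMod k, α (i - r) (j - s) * α r s)
          + (1 / (k : ℂ)) * ∑ r : ZMod k, ∑ s : ZMod k,
              etac k (i * (r - s)) * (κ r s * κ (r + j) (s + j)))) := by
      rw [hAdef]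
      exact Finset.sum_congr rfl fun i _ => Finset.sum_congr rfl fun j _ => hA i j
    calc A = _ := hsum
    _ = (∑ i : ZMod k, ∑ j : ZMod k, ∑ r : ZMod k, ∑ s : ZMod k,
            α (i - r) (j - s) * α r s)
          + (1 / (k : ℂ)) * ∑ i : ZMod k, ∑ j : ZMod k, ∑ r : ZMod k, ∑ s : ZMod k,
            etac k (i * (r - s)) * (κ r s * κ (r + j) (s + j)) := by
        simp only [Finset.sum_add_distrib, ← Finset.mul_sum]
    _ = A * A + T * T := by rw [term1, term2, one_div, inv_mul_cancel_left₀ hkC]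
  have hfac : (A - 1) * (2 * A - 1) = 0 := by
    linear_combination (-1 : ℂ) * key + (A - 1 - T) * hC
  rcases mul_eq_zero.mp hfac with h1 | h2
  · have hA1 : A = 1 := by linear_combination h1
    have hT0 : T = 0 := by linear_combination hC - h1
    refine Or.inl ⟨⟨hA1, hT0⟩, fun hR => ?_⟩
    rw [hA1] at hR
    exact (by norm_num : (1 : ℂ) ≠ 1 / 2) hR.1
  · have hA2 : A = 1 / 2 := by linear_combination h2 / 2
    have hT2 : T = 1 / 2 := by linear_combination hC - h2 / 2
    refine Or.inr ⟨⟨hA2, hT2⟩, fun hL => ?_⟩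
    rw [hA2] at hL
    exact (by norm_num : (1 / 2 : ℂ) ≠ 1) hL.1
end
end

section
/- Let k ≥ 2 and let α : ℤ_k×ℤ_k → ℂ and κ : ℤ_k×ℤ_k → ℂ. Then (α, κ) is an idempotent state system on A_k satisfying Σ_{i,j∈ℤ_k} α_{i,j} = 1 and Σ_{r∈ℤ_k} κ_{r,r} = 0 if and only if: (1) κ_{r,s} = 0 for all r,s ∈ ℤ_k; and (2) the set Γ := {(i,j) ∈ ℤ_k×ℤ_k : α_{i,j} ≠ 0} is a subgroup of ℤ_k×ℤ_k and α_{i,j} = 1/#Γ for all (i,j) ∈ Γ (and α_{i,j} = 0 otherwise). -/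
/-! Statement 3: idempotent state systems with `Σα = 1` and `Tr K = 0` are exactly
those with `κ ≡ 0` whose support `Γ = {(i,j) : α_{i,j} ≠ 0}` is a subgroup of
`ℤ_k × ℤ_k` with `α ≡ 1/#Γ` on `Γ`. -/

open Finset
open scoped ComplexOrder

noncomputable section

section Helpers

variable {G : Type*} [AddCommGroup G] [Fintype G]

lemma card_filter_mem (Γ : AddSubgroup G) [DecidablePred (· ∈ Γ)] :
    (univ.filter (fun x => x ∈ Γ)).card = Nat.card Γ := by
  rw [Nat.card_eq_fintype_card, Fintype.card_subtype]

lemma psd_trace_zero {n : Type*} [Fintype n] [DecidableEq n] {M : Matrix n n ℂ}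
    (hM : M.PosSemidef) (h : ∑ r, M r r = 0) : M = 0 := by
  obtain ⟨B, rfl⟩ : ∃ B : Matrix n n ℂ, M = B.conjTranspose * B := by
    open scoped MatrixOrder Matrix.Norms.L2Operator in
    exact CStarAlgebra.nonneg_iff_eq_star_mul_self.mp hM.nonneg
  have h' : ∑ p : n × n, star (B p.2 p.1) * B p.2 p.1 = 0 := by
    rw [Fintype.sum_prod_type]
    simpa [Matrix.mul_apply, Matrix.conjTranspose_apply] using h
  have hB : ∀ i r, B i r = 0 := by
    intro i r
    have := (Finset.sum_eq_zero_iff_of_nonneg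
      (fun p _ => star_mul_self_nonneg (B p.2 p.1))).mp h' (r, i) (mem_univ _)
    exact CStarRing.star_mul_self_eq_zero_iff _ |>.mp this
  ext i j
  simp [Matrix.mul_apply, hB]

lemma uniform_of_idem (a : G → ℝ) (ha : ∀ x, 0 ≤ a x) (hsum : ∑ x, a x = 1)
    (hidem : ∀ x, a x = ∑ y, a (x - y) * a y) :
    ∃ Γ : AddSubgroup G, (Γ : Set G) = {x | a x ≠ 0} ∧
      ∀ x, x ∈ Γ → a x = 1 / (Nat.card Γ : ℝ) := by
  classical
  obtain ⟨x0, -, hmax⟩ := Finset.exists_max_image univ a ⟨0, mem_univ 0⟩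
  set m := a x0 with hm
  have hm_pos : 0 < m := by
    by_contra h
    push_neg at h
    have hz : ∀ y, a y = 0 := fun y => le_antisymm ((hmax y (mem_univ y)).trans h) (ha y)
    simp [hz] at hsum
  have hkey : ∀ x, a x = m → ∀ y, a y ≠ 0 → a (x - y) = m := by
    intro x hx y hy
    have hzsum : ∑ z : G, (m - a (x - z)) * a z = 0 := by
      have e : ∑ z : G, (m - a (x - z)) * a z
          = m * (∑ z : G, a z) - ∑ z : G, a (x - z) * a z := by
        rw [Finset.mul_sum, ← Finset.sum_sub_distrib]
        exact Finset.sum_congr rfl (by intros; ring)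
      rw [e, hsum, ← hidem x, hx, mul_one, sub_self]
    have hterm := (Finset.sum_eq_zero_iff_of_nonneg
      (fun z _ => mul_nonneg (sub_nonneg.mpr (hmax _ (mem_univ _))) (ha z))).mp
      hzsum y (mem_univ y)
    rcases mul_eq_zero.mp hterm with h | h
    · linarith [sub_eq_zero.mp h]
    · exact absurd h hy
  have h0 : a 0 = m := by
    have := hkey x0 rfl x0 (ne_of_gt hm_pos)
    simpa using this
  have hneg : ∀ y, a y ≠ 0 → a (-y) = m := fun y hy => by
    simpa using hkey 0 h0 y hy
  have hval : ∀ y, a y ≠ 0 → a y = m := by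
    intro y hy
    have h1 := hneg y hy
    have h2 := hneg (-y) (by rw [h1]; exact ne_of_gt hm_pos)
    simpa using h2
  have haddm : ∀ x y, a x ≠ 0 → a y ≠ 0 → a (x + y) ≠ 0 := by
    intro x y hx hy
    have hle : a x * a y ≤ a (x + y) := by
      have h2 := Finset.single_le_sum (f := fun z => a (x + y - z) * a z)
        (fun z _ => mul_nonneg (ha _) (ha _)) (Finset.mem_univ y)
      rw [← hidem (x + y)] at h2
      simpa using h2
    have hpos : 0 < a x * a y :=
      mul_pos ((ha x).lt_of_ne (Ne.symm hx)) ((ha y).lt_of_ne (Ne.symm hy))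
    exact ne_of_gt (lt_of_lt_of_le hpos hle)
  let Γ : AddSubgroup G :=
    { carrier := {x | a x ≠ 0}
      zero_mem' := by simp only [Set.mem_setOf_eq, h0]; exact ne_of_gt hm_pos
      add_mem' := fun hx hy => haddm _ _ hx hy
      neg_mem' := fun {x} hx => by
        simp only [Set.mem_setOf_eq, hneg x hx]; exact ne_of_gt hm_pos }
  refine ⟨Γ, rfl, ?_⟩
  have hmemΓ : ∀ x : G, x ∈ Γ ↔ a x ≠ 0 := fun x => Iff.rfl
  have hcard : (Nat.card Γ : ℝ) * m = 1 := by
    have h1 : ∑ x ∈ univ.filter (fun x => a x ≠ 0), a x = 1 := by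
      rw [Finset.sum_filter_ne_zero]; exact hsum
    have h2 : ∑ x ∈ univ.filter (fun x => a x ≠ 0), a x
        = ((univ.filter (fun x => a x ≠ 0)).card : ℝ) * m := by
      rw [Finset.sum_congr rfl (fun x hx => hval x (Finset.mem_filter.mp hx).2),
        Finset.sum_const, nsmul_eq_mul]
    have h4 : univ.filter (fun x : G => x ∈ Γ) = univ.filter (fun x => a x ≠ 0) := by
      apply Finset.filter_congr; intro x _; simp [hmemΓ]
    rw [← card_filter_mem Γ, h4, ← h2, h1]
  intro x hx
  have hNne : (Nat.card Γ : ℝ) ≠ 0 := by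
    intro h; rw [h, zero_mul] at hcard; exact zero_ne_one hcard
  rw [hval x hx, eq_div_iff hNne]
  linear_combination hcard

lemma unif_conv (Γ : AddSubgroup G) [DecidablePred (· ∈ Γ)] (x : G) :
    ∑ y : G, (if x - y ∈ Γ then (1 / (Nat.card Γ : ℂ)) else 0)
        * (if y ∈ Γ then (1 / (Nat.card Γ : ℂ)) else 0)
      = if x ∈ Γ then (1 / (Nat.card Γ : ℂ)) else 0 := by
  classical
  have hNpos : 0 < Nat.card Γ := Nat.card_pos
  have hNne : ((Nat.card Γ : ℕ) : ℂ) ≠ 0 := Nat.cast_ne_zero.mpr hNpos.ne'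
  by_cases hx : x ∈ Γ
  · have hterm : ∀ y : G, (if x - y ∈ Γ then (1 / (Nat.card Γ : ℂ)) else 0)
        * (if y ∈ Γ then (1 / (Nat.card Γ : ℂ)) else 0)
        = if y ∈ Γ then 1 / (Nat.card Γ : ℂ) ^ 2 else 0 := by
      intro y
      by_cases hy : y ∈ Γ
      · have hxy : x - y ∈ Γ := Γ.sub_mem hx hy
        simp only [hxy, hy, if_true]; ring
      · simp [hy]
    rw [Finset.sum_congr rfl (fun y _ => hterm y), ← Finset.sum_filter,
      Finset.sum_const, nsmul_eq_mul, card_filter_mem, if_pos hx]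
    have harith : ∀ c : ℂ, c ≠ 0 → c * (1 / c ^ 2) = 1 / c := by
      intro c hc; field_simp
    exact harith _ hNne
  · rw [if_neg hx]
    refine Finset.sum_eq_zero fun y _ => ?_
    by_cases hy : y ∈ Γ
    · have hxy : x - y ∉ Γ := fun h => hx (by simpa using Γ.add_mem h hy)
      simp [hxy]
    · simp [hy]

end Helpers

theorem stmt3 (k : ℕ) [NeZero k] (hk : 2 ≤ k) (α κ : ZMod k → ZMod k → ℂ) :
    (IdemSystem k α κ ∧
        (∑ i : ZMod k, ∑ j : ZMod k, α i j) = 1 ∧ (∑ r : ZMod k, κ r r) = 0)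
    ↔
    ((∀ r s : ZMod k, κ r s = 0) ∧
      ∃ Γ : AddSubgroup (ZMod k × ZMod k),
        (Γ : Set (ZMod k × ZMod k)) = {x : ZMod k × ZMod k | α x.1 x.2 ≠ 0} ∧
        ∀ i j : ZMod k, (i, j) ∈ Γ → α i j = 1 / (Nat.card Γ : ℂ)) := by
  classical
  constructor
  · rintro ⟨⟨hnn, hPSD, hA, hB, hC⟩, hsum1, htr0⟩
    have hκ : ∀ r s, κ r s = 0 := by
      have hz := psd_trace_zero hPSD (by simpa using htr0)
      intro r s
      have h2 := congrFun (congrFun hz r) s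
      simpa using h2
    refine ⟨hκ, ?_⟩
    have hre : ∀ i j, α i j = ((α i j).re : ℂ) := by
      intro i j
      have h := Complex.nonneg_iff.mp (hnn i j)
      apply Complex.ext
      · simp
      · simp [← h.2]
    set a : ZMod k × ZMod k → ℝ := fun x => (α x.1 x.2).re with haa
    have ha : ∀ x, 0 ≤ a x := fun x => (Complex.nonneg_iff.mp (hnn x.1 x.2)).1
    have hca : ∀ x : ZMod k × ZMod k, α x.1 x.2 = ((a x : ℝ) : ℂ) := fun x => hre x.1 x.2
    have hsum_r : ∑ x, a x = 1 := by
      have h1 : ((∑ x, a x : ℝ) : ℂ) = 1 := by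
        push_cast
        rw [Fintype.sum_prod_type]
        rw [Finset.sum_congr rfl fun i (_ : i ∈ univ) =>
          Finset.sum_congr rfl fun j (_ : j ∈ univ) => (hca (i, j)).symm]
        exact hsum1
      exact_mod_cast h1
    have hidem_r : ∀ x, a x = ∑ y, a (x - y) * a y := by
      intro x
      have hc : α x.1 x.2 = ∑ y : ZMod k × ZMod k, α (x.1 - y.1) (x.2 - y.2) * α y.1 y.2 := by
        have h := hA x.1 x.2
        simp only [hκ, mul_zero, zero_mul, Finset.sum_const_zero, add_zero] at h
        rw [Fintype.sum_prod_type]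
        exact h
      have h1 : ((a x : ℝ) : ℂ) = ((∑ y, a (x - y) * a y : ℝ) : ℂ) := by
        push_cast
        rw [← hca x, hc]
        refine Finset.sum_congr rfl fun y _ => ?_
        have h2 : α (x.1 - y.1) (x.2 - y.2) = ((a (x - y) : ℝ) : ℂ) := hca (x - y)
        rw [h2, hca y]
      exact_mod_cast h1
    obtain ⟨Γ, hΓset, hΓval⟩ := uniform_of_idem a ha hsum_r hidem_r
    refine ⟨Γ, ?_, ?_⟩
    · rw [hΓset]
      ext x
      simp only [Set.mem_setOf_eq]
      rw [hca x]
      simp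
    · intro i j hij
      have h1 := hΓval (i, j) hij
      rw [hca (i, j), h1]
      push_cast
      ring
  · rintro ⟨hκ, Γ, hΓset, hΓval⟩
    have hmem : ∀ x : ZMod k × ZMod k, x ∈ Γ ↔ α x.1 x.2 ≠ 0 := by
      intro x
      rw [← SetLike.mem_coe, hΓset]
      rfl
    have hα : ∀ i j, α i j = if (i, j) ∈ Γ then 1 / (Nat.card Γ : ℂ) else 0 := by
      intro i j
      by_cases h : (i, j) ∈ Γ
      · rw [if_pos h]; exact hΓval i j h
      · rw [if_neg h]
        by_contra hne
        exact h ((hmem (i, j)).mpr hne)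
    have hNne : ((Nat.card Γ : ℕ) : ℂ) ≠ 0 := Nat.cast_ne_zero.mpr Nat.card_pos.ne'
    have hsum1 : (∑ i : ZMod k, ∑ j : ZMod k, α i j) = 1 := by
      rw [← Fintype.sum_prod_type (f := fun x : ZMod k × ZMod k => α x.1 x.2)]
      rw [Finset.sum_congr rfl (fun x _ => by
        rw [hα x.1 x.2] :
          ∀ x ∈ univ, α x.1 x.2 = if x ∈ Γ then 1 / (Nat.card Γ : ℂ) else 0)]
      rw [← Finset.sum_filter, Finset.sum_const, nsmul_eq_mul, card_filter_mem]
      field_simp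
    refine ⟨⟨?_, ?_, ?_, ?_, ?_⟩, hsum1, by simp [hκ]⟩
    · intro i j
      rw [hα i j]
      split
      · rw [show (1 / ((Nat.card Γ : ℕ) : ℂ)) = (((1 / (Nat.card Γ : ℕ) : ℝ)) : ℂ) by push_cast; ring,
          show (0 : ℂ) = ((0 : ℝ) : ℂ) by norm_num, Complex.real_le_real]
        positivity
      · exact le_refl 0
    · have hM : Matrix.of κ = 0 := by
        ext r s
        exact hκ r s
      rw [hM]
      exact Matrix.PosSemidef.zero
    · intro i j
      simp only [hκ, mul_zero, zero_mul, Finset.sum_const_zero, add_zero]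
      have hconv := unif_conv Γ (i, j)
      rw [hα i j]
      rw [show (∑ r : ZMod k, ∑ s : ZMod k, α (i - r) (j - s) * α r s)
          = ∑ y : ZMod k × ZMod k,
              (if (i, j) - y ∈ Γ then (1 / (Nat.card Γ : ℂ)) else 0)
                * (if y ∈ Γ then (1 / (Nat.card Γ : ℂ)) else 0) from ?_]
      · exact hconv.symm
      · conv_rhs => rw [Fintype.sum_prod_type]
        refine Finset.sum_congr rfl fun r _ => Finset.sum_congr rfl fun s _ => ?_
        set y : ZMod k × ZMod k := (r, s) with hy
        have hsub : (i, j) - y = (i - y.1, j - y.2) := rfl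
        rw [hα (i - y.1) (j - y.2), hα y.1 y.2, hsub]
    · intro r s
      simp [hκ]
    · rw [hsum1]
      simp [hκ]
end
end

section
/- Let k ≥ 2 and let (α, κ) be an idempotent state system on A_k satisfying Σ_{i,j∈ℤ_k} α_{i,j} = Σ_{r∈ℤ_k} κ_{r,r} = 1/2. Let Γ := {(i,j) ∈ ℤ_k×ℤ_k : α_{i,j} ≠ 0}, and define p := min{ i ∈ {1,…,k} : (i mod k, j) ∈ Γ for some j ∈ ℤ_k } and q := min{ j ∈ {1,…,k} : (i, j mod k) ∈ Γ for some i ∈ ℤ_k } (these sets are nonempty since (0,0) ∈ Γ). Then p divides k, q divides k, and for all (i,j) ∈ ℤ_k×ℤ_k, α_{i,j} ≠ 0 implies i ∈ pℤ_k and j ∈ qℤ_k. -/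
/-! Statement 7 (Claim 1): for an idempotent state system with
`Σα = Tr K = 1/2`, the minima `p`, `q` of the first resp. second coordinates
appearing in the support of `α` divide `k`, and `α_{i,j} ≠ 0` implies `p | i`
and `q | j` in `ℤ_k`. -/

open Finset
open scoped ComplexOrder

noncomputable section

/-- `j ∈ qℤ_k`, i.e. `j` is a multiple of `q` in `ℤ_k`. -/
abbrev InQ (k q : ℕ) (j : ZMod k) : Prop := ∃ t : ZMod k, j = (q : ZMod k) * t

section Aux
variable (k : ℕ) [NeZero k]

lemma etac_eq (t : ZMod k) :
    etac k t = Complex.exp (2 * (Real.pi : ℂ) * Complex.I / (k : ℂ)) ^ t.val := by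
  rw [etac, ← Complex.exp_nat_mul]
  congr 1
  ring

lemma omega_pow_k :
    Complex.exp (2 * (Real.pi : ℂ) * Complex.I / (k : ℂ)) ^ k = 1 := by
  rw [← Complex.exp_nat_mul]
  have hk : (k : ℂ) ≠ 0 := Nat.cast_ne_zero.mpr (NeZero.ne k)
  rw [show (k : ℂ) * (2 * (Real.pi : ℂ) * Complex.I / (k : ℂ)) = 2 * Real.pi * Complex.I by
    field_simp]
  exact Complex.exp_two_pi_mul_I

lemma omega_pow_mod (m : ℕ) :
    Complex.exp (2 * (Real.pi : ℂ) * Complex.I / (k : ℂ)) ^ (m % k)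
      = Complex.exp (2 * (Real.pi : ℂ) * Complex.I / (k : ℂ)) ^ m := by
  conv_rhs => rw [← Nat.mod_add_div m k]
  rw [pow_add, pow_mul, omega_pow_k, one_pow, mul_one]

lemma etac_add (a b : ZMod k) : etac k (a + b) = etac k a * etac k b := by
  rw [etac_eq, etac_eq, etac_eq, ← pow_add, ZMod.val_add, omega_pow_mod]

lemma etac_zero : etac k (0 : ZMod k) = 1 := by
  rw [etac_eq, ZMod.val_zero, pow_zero]

lemma conj_etac (a : ZMod k) : (starRingEnd ℂ) (etac k a) = etac k (-a) := by
  have h1 : etac k a * etac k (-a) = 1 := by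
    rw [← etac_add, add_neg_cancel, etac_zero]
  have h2 : (starRingEnd ℂ) (etac k a) = (etac k a)⁻¹ := by
    rw [etac, ← Complex.exp_conj]
    rw [← Complex.exp_neg]
    congr 1
    simp only [map_div₀, map_mul, Complex.conj_I, Complex.conj_natCast, map_ofNat,
      Complex.conj_ofReal]
    ring
  rw [h2, ← eq_inv_of_mul_eq_one_right h1]

lemma hzeta (i r s : ZMod k) :
    etac k (i * (r - s)) = etac k (i * r) * etac k (-(i * s)) := by
  rw [← etac_add]; congr 1; ring

lemma kappa_sum_nonneg (κ : ZMod k → ZMod k → ℂ)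
    (hK : (Matrix.of κ).PosSemidef) (i j : ZMod k) :
    0 ≤ ∑ r : ZMod k, ∑ s : ZMod k,
        etac k (i * (r - s)) * (κ r s * κ (r + j) (s + j)) := by
  obtain ⟨B, hB⟩ : ∃ B : Matrix (ZMod k) (ZMod k) ℂ, Matrix.of κ = B.conjTranspose * B := by
    open scoped MatrixOrder in exact CStarAlgebra.nonneg_iff_eq_star_mul_self.mp hK.nonneg
  have hκ : ∀ r s, κ r s = ∑ t : ZMod k, (starRingEnd ℂ) (B t r) * B t s := by
    intro r s
    have := congrFun (congrFun hB r) s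
    simpa [Matrix.mul_apply, Matrix.conjTranspose_apply] using this
  set c : ZMod k → ZMod k → ℂ :=
    fun t u => ∑ s : ZMod k, etac k (-(i * s)) * (B t s * B u (s + j)) with hc
  set G : ZMod k × ZMod k → ZMod k × ZMod k → ℂ := fun x y =>
    (etac k (i * x.1) * ((starRingEnd ℂ) (B y.1 x.1) * (starRingEnd ℂ) (B y.2 (x.1 + j)))) *
    (etac k (-(i * x.2)) * (B y.1 x.2 * B y.2 (x.2 + j))) with hG
  have hL : (∑ r : ZMod k, ∑ s : ZMod k,
        etac k (i * (r - s)) * (κ r s * κ (r + j) (s + j)))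
      = ∑ x : ZMod k × ZMod k, ∑ y : ZMod k × ZMod k, G x y := by
    rw [Fintype.sum_prod_type]
    refine Finset.sum_congr rfl fun r _ => ?_
    refine Finset.sum_congr rfl fun s _ => ?_
    rw [hκ r s, hκ (r + j) (s + j), Finset.sum_mul_sum, Finset.mul_sum,
      Fintype.sum_prod_type]
    refine Finset.sum_congr rfl fun t _ => ?_
    rw [Finset.mul_sum]
    refine Finset.sum_congr rfl fun u _ => ?_
    simp only [hG]
    rw [hzeta k i r s]
    ring
  have hR : (∑ t : ZMod k, ∑ u : ZMod k, (starRingEnd ℂ) (c t u) * c t u)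
      = ∑ y : ZMod k × ZMod k, ∑ x : ZMod k × ZMod k, G x y := by
    rw [Fintype.sum_prod_type]
    refine Finset.sum_congr rfl fun t _ => ?_
    refine Finset.sum_congr rfl fun u _ => ?_
    have hconj : (starRingEnd ℂ) (c t u)
        = ∑ r : ZMod k, etac k (i * r) *
            ((starRingEnd ℂ) (B t r) * (starRingEnd ℂ) (B u (r + j))) := by
      rw [hc]
      rw [map_sum]
      refine Finset.sum_congr rfl fun r _ => ?_
      rw [map_mul, map_mul, conj_etac, neg_neg]
    rw [hconj, hc, Finset.sum_mul_sum, Fintype.sum_prod_type]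
  have key : (∑ r : ZMod k, ∑ s : ZMod k,
        etac k (i * (r - s)) * (κ r s * κ (r + j) (s + j)))
      = ∑ t : ZMod k, ∑ u : ZMod k, (starRingEnd ℂ) (c t u) * c t u := by
    rw [hL, hR, Finset.sum_comm]
  rw [key]
  refine Finset.sum_nonneg fun t _ => Finset.sum_nonneg fun u _ => ?_
  simpa using star_mul_self_nonneg (c t u)

lemma min_div (S : Set (ZMod k))
    (h0 : (0 : ZMod k) ∈ S) (hadd : ∀ a ∈ S, ∀ b ∈ S, a + b ∈ S)
    (p : ℕ) (hp : p = sInf {n : ℕ | 1 ≤ n ∧ n ≤ k ∧ (n : ZMod k) ∈ S}) :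
    p ∣ k ∧ ∀ i ∈ S, ∃ t : ZMod k, i = (p : ZMod k) * t := by
  have hk0 : 0 < k := Nat.pos_of_ne_zero (NeZero.ne k)
  have hkP : k ∈ {n : ℕ | 1 ≤ n ∧ n ≤ k ∧ (n : ZMod k) ∈ S} :=
    ⟨hk0, le_rfl, by simpa [ZMod.natCast_self] using h0⟩
  have hpP : p ∈ {n : ℕ | 1 ≤ n ∧ n ≤ k ∧ (n : ZMod k) ∈ S} :=
    hp ▸ Nat.sInf_mem ⟨k, hkP⟩
  obtain ⟨hp1, hpk, hpS⟩ := hpP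
  have hmin : ∀ n : ℕ, 1 ≤ n → n ≤ k → ((n : ZMod k) ∈ S) → p ≤ n := by
    intro n h1 h2 h3
    rw [hp]
    exact Nat.sInf_le ⟨h1, h2, h3⟩
  have hmul : ∀ m : ℕ, ((m * p : ℕ) : ZMod k) ∈ S := by
    intro m
    induction m with
    | zero => simpa using h0
    | succ m ih =>
        have h2 := hadd _ ih _ hpS
        have h3 : (((m + 1) * p : ℕ) : ZMod k) = ((m * p : ℕ) : ZMod k) + (p : ZMod k) := by
          push_cast; ring
        rw [h3]; exact h2
  have hdvd : p ∣ k := by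
    by_contra hnd
    have he : k % p ≠ 0 := fun h => hnd (Nat.dvd_of_mod_eq_zero h)
    have helt : k % p < p := Nat.mod_lt _ (by omega)
    have hcast : (((k / p + 1) * p : ℕ) : ZMod k) = ((p - k % p : ℕ) : ZMod k) := by
      have h1 : (k / p + 1) * p = k + (p - k % p) := by
        have h2 := Nat.div_add_mod k p
        have h3 : (k / p + 1) * p = p * (k / p) + p := by ring
        omega
      rw [h1]
      push_cast [ZMod.natCast_self]
      ring
    have hS2 : ((p - k % p : ℕ) : ZMod k) ∈ S := hcast ▸ hmul (k / p + 1)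
    have := hmin (p - k % p) (by omega) (by omega) hS2
    omega
  refine ⟨hdvd, fun i hi => ?_⟩
  obtain ⟨K, hK⟩ := hdvd
  have hK1 : 1 ≤ K := by
    rcases Nat.eq_zero_or_pos K with hz | hpos
    · rw [hz, Nat.mul_zero] at hK; omega
    · exact hpos
  have hnk : i.val < k := ZMod.val_lt i
  have hiv : ((i.val : ℕ) : ZMod k) = i := ZMod.natCast_rightInverse i
  obtain ⟨a, b, hab, hblt⟩ : ∃ a b : ℕ, i.val = p * a + b ∧ b < p :=
    ⟨i.val / p, i.val % p, (Nat.div_add_mod _ _).symm, Nat.mod_lt _ (by omega)⟩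
  by_cases he : b = 0
  · refine ⟨((a : ℕ) : ZMod k), ?_⟩
    have h1 : ((p * a : ℕ) : ZMod k) = i := by
      rw [show p * a = i.val by omega, hiv]
    rw [← h1]
    push_cast
    ring
  · exfalso
    obtain ⟨K', hK'⟩ : ∃ K', K = K' + 1 := ⟨K - 1, by omega⟩
    have h1 : i.val + a * K' * p = b + a * k := by
      rw [hab, hK, hK']; ring
    have h2 : ((i.val + a * K' * p : ℕ) : ZMod k) = ((b + a * k : ℕ) : ZMod k) := by
      rw [h1]
    push_cast [ZMod.natCast_self] at h2
    have hcast : ((b : ℕ) : ZMod k) = i + ((a * K' * p : ℕ) : ZMod k) := by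
      rw [← hiv]
      push_cast
      linear_combination -h2
    have hS2 : ((b : ℕ) : ZMod k) ∈ S := by
      rw [hcast]
      exact hadd i hi _ (hmul (a * K'))
    have := hmin b (by omega) (by omega) hS2
    omega

end Aux

theorem stmt7 (k : ℕ) [NeZero k] (hk : 2 ≤ k) (α κ : ZMod k → ZMod k → ℂ)
    (h : IdemSystem k α κ)
    (hα : (∑ i : ZMod k, ∑ j : ZMod k, α i j) = 1 / 2)
    (hκ : (∑ r : ZMod k, κ r r) = 1 / 2)
    (p q : ℕ)
    (hp : p = sInf {i : ℕ | 1 ≤ i ∧ i ≤ k ∧ ∃ j : ZMod k, α (i : ZMod k) j ≠ 0})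
    (hq : q = sInf {j : ℕ | 1 ≤ j ∧ j ≤ k ∧ ∃ i : ZMod k, α i (j : ZMod k) ≠ 0}) :
    p ∣ k ∧ q ∣ k ∧
      ∀ i j : ZMod k, α i j ≠ 0 → InQ k p i ∧ InQ k q j := by
  obtain ⟨hpos, hKpsd, hA, -, -⟩ := h
  -- the κ-term is nonnegative, so α is "superlinear" under convolution
  have hAineq : ∀ i j : ZMod k,
      (∑ r : ZMod k, ∑ s : ZMod k, α (i - r) (j - s) * α r s) ≤ α i j := by
    intro i j
    rw [hA i j]
    have h1 : (0 : ℂ) ≤ 1 / (k : ℂ) := by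
      rw [show (1 / (k : ℂ)) = (((1 / k : ℝ)) : ℂ) by push_cast; ring]
      rw [Complex.zero_le_real]
      positivity
    exact le_add_of_nonneg_right (mul_nonneg h1 (kappa_sum_nonneg k κ hKpsd i j))
  -- support of α is closed under addition
  have hclo : ∀ a b c d : ZMod k, α a b ≠ 0 → α c d ≠ 0 → α (a + c) (b + d) ≠ 0 := by
    intro a b c d hab hcd
    have hterm : ∀ r s : ZMod k, (0 : ℂ) ≤ α (a + c - r) (b + d - s) * α r s :=
      fun r s => mul_nonneg (hpos _ _) (hpos _ _)
    have key : α a b * α c d ≤ α (a + c) (b + d) := by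
      refine le_trans ?_ (hAineq (a + c) (b + d))
      calc α a b * α c d
          = α (a + c - c) (b + d - d) * α c d := by
            rw [add_sub_cancel_right, add_sub_cancel_right]
        _ ≤ ∑ s : ZMod k, α (a + c - c) (b + d - s) * α c s :=
            Finset.single_le_sum (fun s _ => hterm c s) (Finset.mem_univ d)
        _ ≤ ∑ r : ZMod k, ∑ s : ZMod k, α (a + c - r) (b + d - s) * α r s :=
            Finset.single_le_sum
              (fun r _ => Finset.sum_nonneg fun s _ => hterm r s) (Finset.mem_univ c)
    have hpos1 : 0 < α a b := lt_of_le_of_ne (hpos a b) (Ne.symm hab)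
    have hpos2 : 0 < α c d := lt_of_le_of_ne (hpos c d) (Ne.symm hcd)
    exact ne_of_gt (lt_of_lt_of_le (mul_pos hpos1 hpos2) key)
  -- some α is nonzero
  obtain ⟨a, b, hab⟩ : ∃ a b : ZMod k, α a b ≠ 0 := by
    by_contra hz
    push_neg at hz
    rw [Finset.sum_eq_zero (fun i _ => Finset.sum_eq_zero fun j _ => hz i j)] at hα
    norm_num at hα
  -- hence α 0 0 ≠ 0
  have h00 : α 0 0 ≠ 0 := by
    have hiter : ∀ m : ℕ, α ((m + 1) • a) ((m + 1) • b) ≠ 0 := by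
      intro m
      induction m with
      | zero => simpa using hab
      | succ m ih =>
          have := hclo _ _ _ _ ih hab
          rwa [show (m + 1 + 1) • a = (m + 1) • a + a by rw [succ_nsmul],
            show (m + 1 + 1) • b = (m + 1) • b + b by rw [succ_nsmul]]
    have := hiter (k - 1)
    rwa [show (k - 1 + 1) = k by omega, show k • a = (0 : ZMod k) by
        rw [nsmul_eq_mul, ZMod.natCast_self, zero_mul],
      show k • b = (0 : ZMod k) by rw [nsmul_eq_mul, ZMod.natCast_self, zero_mul]] at this
  -- apply min_div to both coordinate projections
  have hP := min_div k {i : ZMod k | ∃ j, α i j ≠ 0} ⟨0, h00⟩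
    (by rintro x ⟨jx, hx⟩ y ⟨jy, hy⟩; exact ⟨jx + jy, hclo _ _ _ _ hx hy⟩) p hp
  have hQ := min_div k {j : ZMod k | ∃ i, α i j ≠ 0} ⟨0, h00⟩
    (by rintro x ⟨ix, hx⟩ y ⟨iy, hy⟩
        exact ⟨ix + iy, by simpa using hclo _ _ _ _ hx hy⟩) q hq
  exact ⟨hP.1, hQ.1, fun i j hij => ⟨hP.2 i ⟨j, hij⟩, hQ.2 j ⟨i, hij⟩⟩⟩
end
end

section
/- Let k ≥ 2 and let μ be a state on the Sekine algebra A_k, i.e. μ has coefficient family (α, κ) with all α_{i,j} nonnegative reals, K = [κ_{r,s}]_{r,s∈ℤ_k} positive semidefinite, and Σ_{i,j∈ℤ_k} α_{i,j} + Σ_{r∈ℤ_k} κ_{r,r} = 1. If α_{0,0} > 0, then the sequence of convolution powers (μ^{⋆n})_{n≥1} converges: there is a linear functional μ_∞ on A_k such that every coefficient of μ^{⋆n} converges to the corresponding coefficient of μ_∞ as n → ∞. -/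
/-! Statement 15: if `μ` is a state on the Sekine algebra with `α_{0,0} > 0`,
then the convolution powers `μ^{⋆n}` converge coefficientwise.
`convIter k α κ n` is the coefficient family of `μ^{⋆(n+1)}`. -/

open Finset
open scoped ComplexOrder

noncomputable section

/-- The `d`-coefficients of the convolution `μ ⋆ ν` of functionals with
coefficient families `(a, κ)` and `(b, ω)`. -/
def convA (k : ℕ) [NeZero k] (a κ b ω : ZMod k → ZMod k → ℂ) :
    ZMod k → ZMod k → ℂ := fun i j =>
  (∑ m : ZMod k, ∑ n : ZMod k, a m n * b (i - m) (j - n))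
    + (1 / (k : ℂ)) * ∑ r : ZMod k, ∑ s : ZMod k,
        etac k (i * (r - s)) * (κ r s * ω (r + j) (s + j))

/-- The `e`-coefficients of the convolution `μ ⋆ ν` of functionals with
coefficient families `(a, κ)` and `(b, ω)`. -/
def convK (k : ℕ) [NeZero k] (a κ b ω : ZMod k → ZMod k → ℂ) :
    ZMod k → ZMod k → ℂ := fun r s =>
  ∑ i : ZMod k, ∑ j : ZMod k,
    etac k (i * (s - r)) * (a i j * ω (r + j) (s + j) + b i j * κ (r - j) (s - j))

/-- `convIter k α κ n` is the coefficient family of the convolution power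
`μ^{⋆(n+1)}` of the functional `μ` with coefficient family `(α, κ)`. -/
def convIter (k : ℕ) [NeZero k] (α κ : ZMod k → ZMod k → ℂ) :
    ℕ → (ZMod k → ZMod k → ℂ) × (ZMod k → ZMod k → ℂ)
  | 0 => (α, κ)
  | n + 1 =>
      (convA k α κ (convIter k α κ n).1 (convIter k α κ n).2,
       convK k α κ (convIter k α κ n).1 (convIter k α κ n).2)


namespace SekineAux

open Filter

section core
lemma tendsto_const_pow (lam : ℂ) (h : ‖lam‖ < 1 ∨ lam = 1) (c : ℂ) :
    ∃ L, Tendsto (fun n => c * lam ^ n) atTop (nhds L) := by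
  rcases h with h | h
  · refine ⟨0, ?_⟩
    have := tendsto_pow_atTop_nhds_zero_of_norm_lt_one (x := lam) (by assumption)
    simpa using this.const_mul c
  · exact ⟨c, by simp [h]⟩

lemma converge_of_rec (lam1 lam2 : ℂ)
    (h1 : ‖lam1‖ < 1 ∨ lam1 = 1) (h2 : ‖lam2‖ < 1 ∨ lam2 = 1)
    (u : ℕ → ℂ)
    (hrec : ∀ n, u (n + 2) = (lam1 + lam2) * u (n + 1) - (lam1 * lam2) * u n)
    (hdeg : lam1 = 1 → lam2 = 1 → u 1 = u 0) :
    ∃ L, Tendsto u atTop (nhds L) := by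
  by_cases hne : lam1 = lam2
  · subst hne
    by_cases hone : lam1 = 1
    · -- constant sequence
      subst hone
      have hconst : ∀ n, u n = u 0 ∧ u (n + 1) = u 0 := by
        intro n
        induction n with
        | zero => exact ⟨rfl, hdeg rfl rfl⟩
        | succ m ih =>
          refine ⟨ih.2, ?_⟩
          have := hrec m
          rw [ih.1, ih.2] at this
          rw [this]; ring
      refine ⟨u 0, ?_⟩
      have : u = fun _ => u 0 := funext fun n => (hconst n).1
      rw [this]; exact tendsto_const_nhds
    · have habs : ‖lam1‖ < 1 := h1.resolve_right hone
      set w : ℂ := u 1 - lam1 * u 0 with hw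
      have hstep : ∀ n, u (n + 1) = lam1 * u n + lam1 ^ n * w := by
        intro n
        induction n with
        | zero => rw [pow_zero, one_mul, hw]; ring
        | succ m ih =>
          have hr := hrec m
          rw [pow_succ]
          linear_combination hr + lam1 * ih
      have hform : ∀ n, u (n + 1) = lam1 ^ (n + 1) * u 0 + (n + 1 : ℂ) * lam1 ^ n * w := by
        intro n
        induction n with
        | zero => simpa using hstep 0
        | succ m ih =>
          rw [hstep (m + 1), ih]
          push_cast
          ring
      refine ⟨0, ?_⟩
      rw [← Filter.tendsto_add_atTop_iff_nat 1]
      have hA : Tendsto (fun n : ℕ => lam1 ^ (n + 1) * u 0) atTop (nhds 0) := by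
        have := tendsto_pow_atTop_nhds_zero_of_norm_lt_one (x := lam1)
          (by assumption)
        have := (this.mul_const (u 0))
        rw [zero_mul] at this
        exact this.comp (tendsto_add_atTop_nat 1)
      have hB : Tendsto (fun n : ℕ => ((n : ℂ) + 1) * lam1 ^ n * w) atTop (nhds 0) := by
        have hsum : Summable (fun n : ℕ => (n : ℂ) ^ 1 * lam1 ^ n) :=
          summable_pow_mul_geometric_of_norm_lt_one 1 (by assumption)
        have hn : Tendsto (fun n : ℕ => (n : ℂ) * lam1 ^ n) atTop (nhds 0) := by
          simpa using hsum.tendsto_atTop_zero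
        have hp : Tendsto (fun n : ℕ => lam1 ^ n) atTop (nhds 0) :=
          tendsto_pow_atTop_nhds_zero_of_norm_lt_one (by assumption)
        have := (hn.add hp).mul_const w
        rw [add_zero, zero_mul] at this
        convert this using 2 with n
        ring
      have := hA.add hB
      rw [add_zero] at this
      refine Tendsto.congr (fun n => ?_) this
      rw [← hform n]
  · -- distinct roots
    have hsub : lam1 - lam2 ≠ 0 := sub_ne_zero.mpr hne
    set c1 : ℂ := (u 1 - lam2 * u 0) / (lam1 - lam2) with hc1
    set c2 : ℂ := (lam1 * u 0 - u 1) / (lam1 - lam2) with hc2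
    have hform : ∀ n, u n = c1 * lam1 ^ n + c2 * lam2 ^ n ∧
        u (n + 1) = c1 * lam1 ^ (n + 1) + c2 * lam2 ^ (n + 1) := by
      intro n
      induction n with
      | zero =>
        constructor
        · rw [hc1, hc2]; field_simp; ring
        · rw [hc1, hc2]; field_simp; ring
      | succ m ih =>
        refine ⟨ih.2, ?_⟩
        have hr := hrec m
        rw [ih.1, ih.2] at hr
        rw [hr]; ring
    obtain ⟨L1, hL1⟩ := tendsto_const_pow lam1 h1 c1
    obtain ⟨L2, hL2⟩ := tendsto_const_pow lam2 h2 c2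
    refine ⟨L1 + L2, ?_⟩
    refine Tendsto.congr (fun n => ?_) (hL1.add hL2)
    exact (hform n).1.symm

lemma root_norm (a b c d : ℂ) (A Kc δ : ℝ) (hδ : 0 < δ)
    (ha : ‖a - (δ : ℂ)‖ ≤ A - δ) (hd : ‖d - (δ : ℂ)‖ ≤ A - δ)
    (hb : ‖b‖ ≤ Kc) (hc : ‖c‖ ≤ Kc) (hAK : A + Kc ≤ 1)
    (lam : ℂ) (hlam : (a - lam) * (d - lam) = b * c) :
    ‖lam‖ < 1 ∨ lam = 1 := by
  have hKc0 : 0 ≤ Kc := le_trans (norm_nonneg b) hb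
  have hδA : δ ≤ A := by linarith [norm_nonneg (a - (δ : ℂ)), ha]
  have hA1 : A ≤ 1 := by linarith
  -- first: |lam - δ| ≤ 1 - δ
  have hball : ‖lam - (δ : ℂ)‖ ≤ 1 - δ := by
    by_contra hgt
    push_neg at hgt
    have htri1 : ‖lam - (δ : ℂ)‖ ≤ ‖lam - a‖ + ‖a - (δ : ℂ)‖ := by
      calc ‖lam - (δ : ℂ)‖ = ‖(lam - a) + (a - (δ : ℂ))‖ := by ring_nf
        _ ≤ _ := norm_add_le _ _
    have htri2 : ‖lam - (δ : ℂ)‖ ≤ ‖lam - d‖ + ‖d - (δ : ℂ)‖ := by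
      calc ‖lam - (δ : ℂ)‖ = ‖(lam - d) + (d - (δ : ℂ))‖ := by ring_nf
        _ ≤ _ := norm_add_le _ _
    have hla : Kc < ‖lam - a‖ := by linarith
    have hld : Kc < ‖lam - d‖ := by linarith
    have heq : ‖lam - a‖ * ‖lam - d‖ = ‖b‖ * ‖c‖ := by
      rw [← norm_mul, ← norm_mul]
      congr 1
      linear_combination hlam
    have hlt : Kc * Kc < ‖lam - a‖ * ‖lam - d‖ :=
      mul_lt_mul'' hla hld hKc0 hKc0
    have hge : ‖b‖ * ‖c‖ ≤ Kc * Kc :=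
      mul_le_mul hb hc (norm_nonneg c) hKc0
    linarith [heq ▸ hge]
  have habs1 : ‖lam‖ ≤ 1 := by
    calc ‖lam‖ = ‖(lam - (δ : ℂ)) + (δ : ℂ)‖ := by ring_nf
      _ ≤ ‖lam - (δ : ℂ)‖ + ‖(δ : ℂ)‖ := norm_add_le _ _
      _ ≤ (1 - δ) + δ := by
          have : ‖(δ : ℂ)‖ = δ := by
            rw [Complex.norm_real, Real.norm_eq_abs, abs_of_pos hδ]
          linarith [this]
      _ = 1 := by ring
  rcases lt_or_eq_of_le habs1 with h | h
  · exact Or.inl h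
  · right
    -- |lam| = 1 and |lam - δ| ≤ 1 - δ force lam = 1
    have hsq : Complex.normSq (lam - (δ : ℂ)) ≤ (1 - δ) ^ 2 := by
      have h0 : ‖lam - (δ : ℂ)‖ ^ 2 ≤ (1 - δ) ^ 2 := by
        apply pow_le_pow_left₀ (norm_nonneg _) hball
      rwa [Complex.sq_norm] at h0
    have hns : Complex.normSq lam = 1 := by
      have : ‖lam‖ ^ 2 = 1 := by rw [h]; norm_num
      rwa [Complex.sq_norm] at this
    rw [Complex.normSq_apply] at hns
    have hre : (lam - (δ : ℂ)).re = lam.re - δ := by simp [Complex.sub_re]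
    have him : (lam - (δ : ℂ)).im = lam.im := by simp [Complex.sub_im]
    rw [Complex.normSq_apply, hre, him] at hsq
    have hre1 : 1 ≤ lam.re := by nlinarith
    have him0 : lam.im = 0 ∧ lam.re = 1 := by constructor <;> nlinarith
    exact Complex.ext (by simp [him0.2]) (by simp [him0.1])

lemma key2 (a b c d : ℂ) (A Kc δ : ℝ) (hδ : 0 < δ)
    (ha : ‖a - (δ : ℂ)‖ ≤ A - δ) (hd : ‖d - (δ : ℂ)‖ ≤ A - δ)
    (hb : ‖b‖ ≤ Kc) (hc : ‖c‖ ≤ Kc) (hAK : A + Kc ≤ 1)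
    (p q : ℕ → ℂ) (hp : ∀ n, p (n + 1) = a * p n + b * q n)
    (hq : ∀ n, q (n + 1) = c * p n + d * q n) :
    (∃ P, Tendsto p atTop (nhds P)) ∧ (∃ Q, Tendsto q atTop (nhds Q)) := by
  have hKc0 : 0 ≤ Kc := le_trans (norm_nonneg b) hb
  have hδA : δ ≤ A := by linarith [norm_nonneg (a - (δ : ℂ)), ha]
  have hA1 : A ≤ 1 := by linarith
  obtain ⟨s, hs⟩ := IsAlgClosed.exists_pow_nat_eq ((a + d) ^ 2 - 4 * (a * d - b * c))
    (show 0 < 2 by norm_num)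
  set lam1 : ℂ := (a + d + s) / 2 with hl1
  set lam2 : ℂ := (a + d - s) / 2 with hl2
  have hsum : lam1 + lam2 = a + d := by rw [hl1, hl2]; ring
  have hprod : lam1 * lam2 = a * d - b * c := by
    rw [hl1, hl2]
    field_simp
    linear_combination -hs
  have hr1 : (a - lam1) * (d - lam1) = b * c := by linear_combination hprod - lam1 * hsum + hs / 2
  have hr2 : (a - lam2) * (d - lam2) = b * c := by linear_combination hprod - lam2 * hsum + hs / 2
  have h1 := root_norm a b c d A Kc δ hδ ha hd hb hc hAK lam1 hr1
  have h2 := root_norm a b c d A Kc δ hδ ha hd hb hc hAK lam2 hr2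
  -- degenerate double root at 1 forces identity
  have hdeg : lam1 = 1 → lam2 = 1 → (a = 1 ∧ d = 1 ∧ b = 0 ∧ c = 0) := by
    intro e1 e2
    rw [e1, e2] at hsum hprod
    have had : a + d = 2 := by linear_combination -hsum
    have habs_a : ‖a‖ ≤ A := by
      calc ‖a‖ = ‖(a - (δ : ℂ)) + (δ : ℂ)‖ := by ring_nf
        _ ≤ ‖a - (δ : ℂ)‖ + ‖(δ : ℂ)‖ := norm_add_le _ _
        _ ≤ (A - δ) + δ := by
            have : ‖(δ : ℂ)‖ = δ := by rw [Complex.norm_real, Real.norm_eq_abs, abs_of_pos hδ]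
            linarith [this]
        _ = A := by ring
    have habs_d : ‖d‖ ≤ A := by
      calc ‖d‖ = ‖(d - (δ : ℂ)) + (δ : ℂ)‖ := by ring_nf
        _ ≤ ‖d - (δ : ℂ)‖ + ‖(δ : ℂ)‖ := norm_add_le _ _
        _ ≤ (A - δ) + δ := by
            have : ‖(δ : ℂ)‖ = δ := by rw [Complex.norm_real, Real.norm_eq_abs, abs_of_pos hδ]
            linarith [this]
        _ = A := by ring
    have hre : a.re + d.re = 2 := by
      have := congrArg Complex.re had
      simpa using this
    have hra : a.re ≤ A := le_trans (Complex.re_le_norm a) habs_a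
    have hrd : d.re ≤ A := le_trans (Complex.re_le_norm d) habs_d
    have hA_eq : A = 1 := le_antisymm hA1 (by linarith)
    have hKc_eq : Kc = 0 := by linarith
    have hbz : b = 0 := by
      have : ‖b‖ ≤ 0 := by linarith
      exact norm_eq_zero.mp (le_antisymm this (norm_nonneg b))
    have hcz : c = 0 := by
      have : ‖c‖ ≤ 0 := by linarith
      exact norm_eq_zero.mp (le_antisymm this (norm_nonneg c))
    have hra1 : a.re = 1 := by linarith
    have hrd1 : d.re = 1 := by linarith
    have hima : a.im = 0 := by
      have h2 : Complex.normSq a ≤ 1 := by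
        have : ‖a‖ ^ 2 ≤ 1 := by nlinarith [norm_nonneg a]
        rwa [Complex.sq_norm] at this
      rw [Complex.normSq_apply, hra1] at h2
      nlinarith
    have himd : d.im = 0 := by
      have h2 : Complex.normSq d ≤ 1 := by
        have : ‖d‖ ^ 2 ≤ 1 := by nlinarith [norm_nonneg d]
        rwa [Complex.sq_norm] at this
      rw [Complex.normSq_apply, hrd1] at h2
      nlinarith
    exact ⟨Complex.ext (by simp [hra1]) (by simp [hima]),
      Complex.ext (by simp [hrd1]) (by simp [himd]), hbz, hcz⟩
  have hrecp : ∀ n, p (n + 2) = (lam1 + lam2) * p (n + 1) - (lam1 * lam2) * p n := by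
    intro n
    rw [hsum, hprod]
    linear_combination hp (n + 1) + b * hq n - d * hp n
  have hrecq : ∀ n, q (n + 2) = (lam1 + lam2) * q (n + 1) - (lam1 * lam2) * q n := by
    intro n
    rw [hsum, hprod]
    linear_combination hq (n + 1) + c * hp n - a * hq n
  constructor
  · exact converge_of_rec lam1 lam2 h1 h2 p hrecp (fun e1 e2 => by
      obtain ⟨ea, ed, eb, ec⟩ := hdeg e1 e2
      rw [hp 0, ea, eb]; ring)
  · exact converge_of_rec lam1 lam2 h1 h2 q hrecq (fun e1 e2 => by
      obtain ⟨ea, ed, eb, ec⟩ := hdeg e1 e2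
      rw [hq 0, ed, ec]; ring)

end core

variable (k : ℕ) [NeZero k]


lemma etac_eq (t : ZMod k) :
    etac k t = Complex.exp (2 * (Real.pi : ℂ) * Complex.I / (k : ℂ)) ^ t.val := by
  rw [etac, ← Complex.exp_nat_mul]
  ring_nf

lemma root_pow_k :
    Complex.exp (2 * (Real.pi : ℂ) * Complex.I / (k : ℂ)) ^ k = 1 := by
  rw [← Complex.exp_nat_mul]
  have hk : (k : ℂ) ≠ 0 := Nat.cast_ne_zero.mpr (NeZero.ne k)
  rw [show (k : ℂ) * (2 * (Real.pi : ℂ) * Complex.I / (k : ℂ)) = 2 * Real.pi * Complex.I by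
    field_simp]
  exact Complex.exp_two_pi_mul_I

lemma etac_add (s t : ZMod k) : etac k (s + t) = etac k s * etac k t := by
  rw [etac_eq, etac_eq, etac_eq, ← pow_add]
  have h : (s.val + t.val) % k = (s + t).val := by
    rw [ZMod.val_add]
  conv_rhs => rw [← Nat.div_add_mod (s.val + t.val) k, pow_add, pow_mul, root_pow_k, one_pow,
    one_mul, h]

lemma etac_zero : etac k (0 : ZMod k) = 1 := by
  rw [etac_eq, ZMod.val_zero, pow_zero]

lemma abs_etac (t : ZMod k) : ‖etac k t‖ = 1 := by
  rw [etac]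
  rw [show 2 * (Real.pi : ℂ) * Complex.I * (t.val : ℂ) / (k : ℂ)
      = ((2 * Real.pi * t.val / k : ℝ) : ℂ) * Complex.I by push_cast; ring]
  exact Complex.norm_exp_ofReal_mul_I _

lemma etac_nsmul (n : ℕ) (t : ZMod k) : etac k (n • t) = etac k t ^ n := by
  induction n with
  | zero => simpa using etac_zero k
  | succ n ih => rw [succ_nsmul, etac_add, ih, pow_succ]

lemma etac_mul_val (i t : ZMod k) : etac k (i * t) = etac k t ^ i.val := by
  rw [← etac_nsmul]
  congr 1
  rw [nsmul_eq_mul, ZMod.natCast_val, ZMod.cast_id]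

lemma etac_ne_one {t : ZMod k} (ht : t ≠ 0) : etac k t ≠ 1 := by
  rw [etac]
  intro h
  rw [Complex.exp_eq_one_iff] at h
  obtain ⟨n, hn⟩ := h
  have hk : (k : ℂ) ≠ 0 := Nat.cast_ne_zero.mpr (NeZero.ne k)
  have hI : (2 * (Real.pi : ℂ) * Complex.I) ≠ 0 := by
    simp [Real.pi_ne_zero, Complex.I_ne_zero, Complex.ofReal_ne_zero]
  have h2 : (t.val : ℂ) = n * k := by
    rw [div_eq_iff hk] at hn
    exact mul_left_cancel₀ hI (by linear_combination hn)
  have h3 : (t.val : ℤ) = n * k := by exact_mod_cast h2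
  have h4 : (k : ℤ) ∣ (t.val : ℤ) := ⟨n, by linarith [h3]⟩
  have h5 : k ∣ t.val := Int.ofNat_dvd.mp (by exact_mod_cast h4)
  have h6 := Nat.eq_zero_of_dvd_of_lt h5 (ZMod.val_lt t)
  exact ht (by rwa [← ZMod.val_eq_zero])

lemma sum_etac (t : ZMod k) :
    ∑ i : ZMod k, etac k (i * t) = if t = 0 then (k : ℂ) else 0 := by
  have hval : ∑ i : ZMod k, etac k (i * t) = ∑ m ∈ range k, etac k t ^ m := by
    refine Finset.sum_bij' (fun i _ => i.val) (fun m _ => (m : ZMod k)) ?_ ?_ ?_ ?_ ?_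
    · intro i _; exact mem_range.mpr (ZMod.val_lt i)
    · intro m _; exact mem_univ _
    · intro i _; simp [ZMod.natCast_val, ZMod.cast_id]
    · intro m hm; exact ZMod.val_cast_of_lt (mem_range.mp hm)
    · intro i _; rw [etac_mul_val]
  rw [hval]
  by_cases ht : t = 0
  · simp [ht, etac_zero]
  · have hpow : etac k t ^ k = 1 := by
      rw [← etac_nsmul]
      have : (k : ℕ) • t = 0 := by
        rw [nsmul_eq_mul, ZMod.natCast_self, zero_mul]
      rw [this, etac_zero]
    rw [if_neg ht, geom_sum_eq (etac_ne_one k ht), hpow, sub_self, zero_div]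


def Ftr (b : ZMod k → ZMod k → ℂ) (x y : ZMod k) : ℂ :=
  ∑ i : ZMod k, ∑ j : ZMod k, etac k (x * i + y * j) * b i j

def Gtr (ω : ZMod k → ZMod k → ℂ) (t x : ZMod k) : ℂ :=
  ∑ r : ZMod k, etac k (x * r) * ω r (r + t)

lemma etac_mul_etac (A B C D : ZMod k) (h : A + B = C + D) :
    etac k A * etac k B = etac k C * etac k D := by
  rw [← etac_add, ← etac_add, h]

def shear : ((ZMod k × ZMod k) × (ZMod k × ZMod k)) ≃ ((ZMod k × ZMod k) × (ZMod k × ZMod k)) where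
  toFun p := (p.2, (p.1.1 - p.2.1, p.1.2 - p.2.2))
  invFun p := ((p.2.1 + p.1.1, p.2.2 + p.1.2), p.1)
  left_inv := by intro p; simp
  right_inv := by intro p; simp

lemma Ftr_flat (b : ZMod k → ZMod k → ℂ) (x y : ZMod k) :
    Ftr k b x y = ∑ q : ZMod k × ZMod k, etac k (x * q.1 + y * q.2) * b q.1 q.2 := by
  rw [Ftr, Fintype.sum_prod_type]

lemma FT_part1 (a b : ZMod k → ZMod k → ℂ) (x y : ZMod k) :
    (∑ i : ZMod k, ∑ j : ZMod k, etac k (x * i + y * j)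
        * (∑ m : ZMod k, ∑ n : ZMod k, a m n * b (i - m) (j - n)))
      = Ftr k a x y * Ftr k b x y := by
  have hL : (∑ i : ZMod k, ∑ j : ZMod k, etac k (x * i + y * j)
        * (∑ m : ZMod k, ∑ n : ZMod k, a m n * b (i - m) (j - n)))
      = ∑ p : (ZMod k × ZMod k) × (ZMod k × ZMod k),
          etac k (x * p.1.1 + y * p.1.2) * (a p.2.1 p.2.2 * b (p.1.1 - p.2.1) (p.1.2 - p.2.2)) := by
    simp only [Fintype.sum_prod_type, Finset.mul_sum]
  have hR : Ftr k a x y * Ftr k b x y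
      = ∑ p : (ZMod k × ZMod k) × (ZMod k × ZMod k),
          (etac k (x * p.1.1 + y * p.1.2) * a p.1.1 p.1.2)
            * (etac k (x * p.2.1 + y * p.2.2) * b p.2.1 p.2.2) := by
    rw [Ftr_flat, Ftr_flat, Finset.sum_mul_sum]
    exact (Fintype.sum_prod_type (f := fun p : (ZMod k × ZMod k) × (ZMod k × ZMod k) =>
      (etac k (x * p.1.1 + y * p.1.2) * a p.1.1 p.1.2)
        * (etac k (x * p.2.1 + y * p.2.2) * b p.2.1 p.2.2))).symm
  rw [hL, hR]
  refine Fintype.sum_equiv (shear k) _ _ fun p => ?_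
  simp only [shear, Equiv.coe_fn_mk]
  rw [mul_mul_mul_comm,
    etac_mul_etac k _ _ (x * p.1.1 + y * p.1.2) 0 (by ring), etac_zero, mul_one]

def perm2 : ((ZMod k × ZMod k) × (ZMod k × ZMod k)) ≃ ((ZMod k × ZMod k) × (ZMod k × ZMod k)) where
  toFun p := (p.2, (p.1.2, p.1.1))
  invFun q := ((q.2.2, q.2.1), q.1)
  left_inv := by intro p; rfl
  right_inv := by intro q; rfl

lemma FT_part2 (κw ω : ZMod k → ZMod k → ℂ) (x y : ZMod k) :
    (∑ i : ZMod k, ∑ j : ZMod k, etac k (x * i + y * j)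
        * ((1 / (k : ℂ)) * ∑ r : ZMod k, ∑ s : ZMod k,
            etac k (i * (r - s)) * (κw r s * ω (r + j) (s + j))))
      = Gtr k κw x (-y) * Gtr k ω x y := by
  have hk : (k : ℂ) ≠ 0 := Nat.cast_ne_zero.mpr (NeZero.ne k)
  have hL : (∑ i : ZMod k, ∑ j : ZMod k, etac k (x * i + y * j)
        * ((1 / (k : ℂ)) * ∑ r : ZMod k, ∑ s : ZMod k,
            etac k (i * (r - s)) * (κw r s * ω (r + j) (s + j))))
      = ∑ p : (ZMod k × ZMod k) × (ZMod k × ZMod k),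
          etac k (x * p.1.1 + y * p.1.2) * ((1 / (k : ℂ)) *
            (etac k (p.1.1 * (p.2.1 - p.2.2))
              * (κw p.2.1 p.2.2 * ω (p.2.1 + p.1.2) (p.2.2 + p.1.2)))) := by
    simp only [Fintype.sum_prod_type, Finset.mul_sum]
  rw [hL]
  rw [Fintype.sum_equiv (perm2 k) _ (fun q : (ZMod k × ZMod k) × (ZMod k × ZMod k) =>
      (κw q.1.1 q.1.2 * (ω (q.1.1 + q.2.1) (q.1.2 + q.2.1) * etac k (y * q.2.1)))
        * ((1 / (k : ℂ)) * etac k (q.2.2 * (x + q.1.1 - q.1.2)))) ?_]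
  swap
  · intro p
    simp only [perm2, Equiv.coe_fn_mk]
    calc etac k (x * p.1.1 + y * p.1.2) * ((1 / (k : ℂ)) *
            (etac k (p.1.1 * (p.2.1 - p.2.2))
              * (κw p.2.1 p.2.2 * ω (p.2.1 + p.1.2) (p.2.2 + p.1.2))))
        = (etac k (x * p.1.1 + y * p.1.2) * etac k (p.1.1 * (p.2.1 - p.2.2)))
            * ((1 / (k : ℂ)) * (κw p.2.1 p.2.2 * ω (p.2.1 + p.1.2) (p.2.2 + p.1.2))) := by ring
      _ = (etac k (y * p.1.2) * etac k (p.1.1 * (x + p.2.1 - p.2.2)))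
            * ((1 / (k : ℂ)) * (κw p.2.1 p.2.2 * ω (p.2.1 + p.1.2) (p.2.2 + p.1.2))) := by
          rw [etac_mul_etac k _ _ (y * p.1.2) (p.1.1 * (x + p.2.1 - p.2.2)) (by ring)]
      _ = _ := by ring
  -- now unflatten and collapse the i-sum then the s-sum
  rw [Fintype.sum_prod_type]
  have hcol : ∀ rs : ZMod k × ZMod k,
      (∑ ji : ZMod k × ZMod k,
        (κw rs.1 rs.2 * (ω (rs.1 + ji.1) (rs.2 + ji.1) * etac k (y * ji.1)))
          * ((1 / (k : ℂ)) * etac k (ji.2 * (x + rs.1 - rs.2))))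
      = if rs.2 = x + rs.1 then
          ∑ j : ZMod k, κw rs.1 rs.2 * (ω (rs.1 + j) (rs.2 + j) * etac k (y * j)) else 0 := by
    intro rs
    rw [Fintype.sum_prod_type]
    have : ∀ j : ZMod k,
        (∑ i : ZMod k, (κw rs.1 rs.2 * (ω (rs.1 + j) (rs.2 + j) * etac k (y * j)))
          * ((1 / (k : ℂ)) * etac k (i * (x + rs.1 - rs.2))))
        = if rs.2 = x + rs.1 then
            κw rs.1 rs.2 * (ω (rs.1 + j) (rs.2 + j) * etac k (y * j)) else 0 := by
      intro j
      rw [← Finset.mul_sum]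
      rw [show (∑ i : ZMod k, (1 / (k : ℂ)) * etac k (i * (x + rs.1 - rs.2)))
          = (1 / (k : ℂ)) * ∑ i : ZMod k, etac k (i * (x + rs.1 - rs.2)) from
          (Finset.mul_sum _ _ _).symm]
      rw [sum_etac]
      by_cases hc : x + rs.1 - rs.2 = 0
      · rw [if_pos hc, if_pos (show rs.2 = x + rs.1 by linear_combination -hc)]
        field_simp
      · rw [if_neg hc, if_neg (by intro h; exact hc (by linear_combination -h)), mul_zero, mul_zero]
    rw [Finset.sum_congr rfl fun j _ => this j]
    split_ifs <;> simp
  rw [Finset.sum_congr rfl fun rs _ => hcol rs]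
  rw [Fintype.sum_prod_type]
  have hsite : ∀ r : ZMod k,
      (∑ s : ZMod k, if s = x + r then
          ∑ j : ZMod k, κw r s * (ω (r + j) (s + j) * etac k (y * j)) else 0)
      = ∑ j : ZMod k, κw r (x + r) * (ω (r + j) ((x + r) + j) * etac k (y * j)) := by
    intro r
    rw [Finset.sum_ite_eq' univ (x + r)
      (fun s => ∑ j : ZMod k, κw r s * (ω (r + j) (s + j) * etac k (y * j))),
      if_pos (mem_univ _)]
  rw [Finset.sum_congr rfl fun r _ => hsite r]
  rw [Gtr, Gtr, Finset.sum_mul_sum]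
  refine Finset.sum_congr rfl fun r _ => ?_
  rw [← Equiv.sum_comp (Equiv.addLeft r)
    (fun u => (etac k (-y * r) * κw r (r + x)) * (etac k (y * u) * ω u (u + x)))]
  refine Finset.sum_congr rfl fun j _ => ?_
  simp only [Equiv.coe_addLeft]
  calc κw r (x + r) * (ω (r + j) ((x + r) + j) * etac k (y * j))
      = (etac k (y * j) * etac k 0) * (κw r (x + r) * ω (r + j) ((x + r) + j)) := by
        rw [etac_zero]; ring
    _ = (etac k (-y * r) * etac k (y * (r + j))) * (κw r (x + r) * ω (r + j) ((x + r) + j)) := by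
        rw [etac_mul_etac k (-y * r) (y * (r + j)) (y * j) 0 (by ring)]
    _ = (etac k (-y * r) * κw r (r + x)) * (etac k (y * (r + j)) * ω (r + j) ((r + j) + x)) := by
        rw [show r + x = x + r from add_comm r x, show (r + j) + x = (x + r) + j by ring]
        ring

lemma FT_convA (a κw b ω : ZMod k → ZMod k → ℂ) (x y : ZMod k) :
    Ftr k (convA k a κw b ω) x y
      = Ftr k a x y * Ftr k b x y + Gtr k κw x (-y) * Gtr k ω x y := by
  rw [← FT_part1 k a b x y, ← FT_part2 k κw ω x y, Ftr]
  simp only [convA, mul_add, Finset.sum_add_distrib]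

def shiftK1 : (ZMod k × (ZMod k × ZMod k)) ≃ ((ZMod k × ZMod k) × ZMod k) where
  toFun p := (p.2, p.1 + p.2.2)
  invFun q := (q.2 - q.1.2, q.1)
  left_inv := by intro p; simp
  right_inv := by intro q; simp

def shiftK2 : (ZMod k × (ZMod k × ZMod k)) ≃ (ZMod k × (ZMod k × ZMod k)) where
  toFun p := (p.1 - p.2.2, p.2)
  invFun q := (q.1 + q.2.2, q.2)
  left_inv := by intro p; simp
  right_inv := by intro q; simp

lemma FT_convK (a κw b ω : ZMod k → ZMod k → ℂ) (t x : ZMod k) :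
    Gtr k (convK k a κw b ω) t x
      = Ftr k a t (-x) * Gtr k ω t x + Gtr k κw t x * Ftr k b t x := by
  have hsimp : ∀ r : ZMod k, (r + t) - r = t := fun r => by ring
  have hL : Gtr k (convK k a κw b ω) t x
      = (∑ p : ZMod k × (ZMod k × ZMod k),
          etac k (x * p.1) * (etac k (p.2.1 * t) * (a p.2.1 p.2.2
            * ω (p.1 + p.2.2) ((p.1 + t) + p.2.2))))
        + (∑ p : ZMod k × (ZMod k × ZMod k),
          etac k (x * p.1) * (etac k (p.2.1 * t) * (b p.2.1 p.2.2
            * κw (p.1 - p.2.2) ((p.1 + t) - p.2.2)))) := by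
    rw [Gtr]
    simp only [convK, hsimp, mul_add, Finset.sum_add_distrib, Finset.mul_sum,
      Fintype.sum_prod_type]

  rw [hL]
  congr 1
  · rw [Ftr_flat, Gtr, Finset.sum_mul_sum, ← Fintype.sum_prod_type
      (f := fun q : (ZMod k × ZMod k) × ZMod k =>
        (etac k (t * q.1.1 + -x * q.1.2) * a q.1.1 q.1.2)
          * (etac k (x * q.2) * ω q.2 (q.2 + t)))]
    refine Fintype.sum_equiv (shiftK1 k) _ _ fun p => ?_
    simp only [shiftK1, Equiv.coe_fn_mk]
    calc etac k (x * p.1) * (etac k (p.2.1 * t) * (a p.2.1 p.2.2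
            * ω (p.1 + p.2.2) ((p.1 + t) + p.2.2)))
        = (etac k (x * p.1) * etac k (p.2.1 * t))
            * (a p.2.1 p.2.2 * ω (p.1 + p.2.2) ((p.1 + p.2.2) + t)) := by
          rw [show (p.1 + t) + p.2.2 = (p.1 + p.2.2) + t by ring]; ring
      _ = (etac k (t * p.2.1 + -x * p.2.2) * etac k (x * (p.1 + p.2.2)))
            * (a p.2.1 p.2.2 * ω (p.1 + p.2.2) ((p.1 + p.2.2) + t)) := by
          rw [etac_mul_etac k (x * p.1) (p.2.1 * t) (t * p.2.1 + -x * p.2.2)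
            (x * (p.1 + p.2.2)) (by ring)]
      _ = _ := by ring
  · rw [Gtr, Ftr_flat, Finset.sum_mul_sum, ← Fintype.sum_prod_type
      (f := fun q : ZMod k × (ZMod k × ZMod k) =>
        (etac k (x * q.1) * κw q.1 (q.1 + t))
          * (etac k (t * q.2.1 + x * q.2.2) * b q.2.1 q.2.2))]
    refine Fintype.sum_equiv (shiftK2 k) _ _ fun p => ?_
    simp only [shiftK2, Equiv.coe_fn_mk]
    calc etac k (x * p.1) * (etac k (p.2.1 * t) * (b p.2.1 p.2.2
            * κw (p.1 - p.2.2) ((p.1 + t) - p.2.2)))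
        = (etac k (x * p.1) * etac k (p.2.1 * t))
            * (b p.2.1 p.2.2 * κw (p.1 - p.2.2) ((p.1 - p.2.2) + t)) := by
          rw [show (p.1 + t) - p.2.2 = (p.1 - p.2.2) + t by ring]; ring
      _ = (etac k (x * (p.1 - p.2.2)) * etac k (t * p.2.1 + x * p.2.2))
            * (b p.2.1 p.2.2 * κw (p.1 - p.2.2) ((p.1 - p.2.2) + t)) := by
          rw [etac_mul_etac k (x * p.1) (p.2.1 * t) (x * (p.1 - p.2.2))
            (t * p.2.1 + x * p.2.2) (by ring)]
      _ = _ := by ring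

lemma inv_F (b : ZMod k → ZMod k → ℂ) (i j : ZMod k) :
    ∑ x : ZMod k, ∑ y : ZMod k, etac k (-(x * i) + -(y * j)) * Ftr k b x y
      = (k : ℂ) ^ 2 * b i j := by
  have hL : ∑ x : ZMod k, ∑ y : ZMod k, etac k (-(x * i) + -(y * j)) * Ftr k b x y
      = ∑ p : (ZMod k × ZMod k) × (ZMod k × ZMod k),
          etac k (-(p.1.1 * i) + -(p.1.2 * j))
            * (etac k (p.1.1 * p.2.1 + p.1.2 * p.2.2) * b p.2.1 p.2.2) := by
    simp only [Ftr_flat, Finset.mul_sum, Fintype.sum_prod_type]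
  rw [hL, Fintype.sum_equiv (Equiv.prodComm _ _)
    (g := fun q : (ZMod k × ZMod k) × (ZMod k × ZMod k) =>
      b q.1.1 q.1.2 * (etac k (q.2.1 * (q.1.1 - i)) * etac k (q.2.2 * (q.1.2 - j)))) _ ?_]
  swap
  · intro p
    simp only [Equiv.prodComm_apply, Prod.swap_prod_mk, Prod.fst_swap, Prod.snd_swap]
    calc etac k (-(p.1.1 * i) + -(p.1.2 * j)) * (etac k (p.1.1 * p.2.1 + p.1.2 * p.2.2)
            * b p.2.1 p.2.2)
        = (etac k (-(p.1.1 * i) + -(p.1.2 * j)) * etac k (p.1.1 * p.2.1 + p.1.2 * p.2.2))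
            * b p.2.1 p.2.2 := by ring
      _ = (etac k (p.1.1 * (p.2.1 - i)) * etac k (p.1.2 * (p.2.2 - j))) * b p.2.1 p.2.2 := by
          rw [etac_mul_etac k _ _ (p.1.1 * (p.2.1 - i)) (p.1.2 * (p.2.2 - j)) (by ring)]
      _ = _ := by ring
  · have hsplit : ∀ q : (ZMod k × ZMod k) × (ZMod k × ZMod k), True := fun _ => trivial
    rw [Fintype.sum_prod_type]
    have hinner : ∀ uv : ZMod k × ZMod k,
        (∑ xy : ZMod k × ZMod k,
          b uv.1 uv.2 * (etac k (xy.1 * (uv.1 - i)) * etac k (xy.2 * (uv.2 - j))))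
        = if uv.1 = i then (if uv.2 = j then (k : ℂ) ^ 2 * b uv.1 uv.2 else 0) else 0 := by
      intro uv
      rw [Fintype.sum_prod_type]
      rw [show (∑ x : ZMod k, ∑ y : ZMod k,
          b uv.1 uv.2 * (etac k (x * (uv.1 - i)) * etac k (y * (uv.2 - j))))
        = b uv.1 uv.2 * ((∑ x : ZMod k, etac k (x * (uv.1 - i)))
            * (∑ y : ZMod k, etac k (y * (uv.2 - j)))) by
          rw [Finset.sum_mul_sum, Finset.mul_sum]
          refine Finset.sum_congr rfl fun x _ => ?_
          rw [Finset.mul_sum]]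
      rw [sum_etac, sum_etac]
      by_cases h1 : uv.1 = i <;> by_cases h2 : uv.2 = j <;>
        simp [h1, h2, sub_eq_zero] <;> ring
    rw [Finset.sum_congr rfl fun uv _ => hinner uv, Fintype.sum_prod_type]
    have houter : ∀ u : ZMod k,
        (∑ v : ZMod k, if u = i then (if v = j then (k : ℂ) ^ 2 * b u v else 0) else 0)
        = if u = i then (k : ℂ) ^ 2 * b u j else 0 := by
      intro u
      by_cases h1 : u = i
      · simp only [if_pos h1]
        rw [Finset.sum_ite_eq' univ j (fun v => (k : ℂ) ^ 2 * b u v), if_pos (mem_univ _)]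
      · simp [h1]
    rw [Finset.sum_congr rfl fun u _ => houter u,
      Finset.sum_ite_eq' univ i (fun u => (k : ℂ) ^ 2 * b u j), if_pos (mem_univ _)]

lemma inv_G (ω : ZMod k → ZMod k → ℂ) (r s : ZMod k) :
    ∑ x : ZMod k, etac k (-(x * r)) * Gtr k ω (s - r) x = (k : ℂ) * ω r s := by
  have hL : ∑ x : ZMod k, etac k (-(x * r)) * Gtr k ω (s - r) x
      = ∑ p : ZMod k × ZMod k,
          etac k (-(p.1 * r)) * (etac k (p.1 * p.2) * ω p.2 (p.2 + (s - r))) := by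
    simp only [Gtr, Finset.mul_sum, Fintype.sum_prod_type]
  rw [hL, Fintype.sum_equiv (Equiv.prodComm _ _)
    (g := fun q : ZMod k × ZMod k =>
      ω q.1 (q.1 + (s - r)) * etac k (q.2 * (q.1 - r))) _ ?_]
  swap
  · intro p
    simp only [Equiv.prodComm_apply, Prod.fst_swap, Prod.snd_swap]
    calc etac k (-(p.1 * r)) * (etac k (p.1 * p.2) * ω p.2 (p.2 + (s - r)))
        = (etac k (-(p.1 * r)) * etac k (p.1 * p.2)) * ω p.2 (p.2 + (s - r)) := by ring
      _ = (etac k (p.1 * (p.2 - r)) * etac k 0) * ω p.2 (p.2 + (s - r)) := by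
          rw [etac_mul_etac k _ _ (p.1 * (p.2 - r)) 0 (by ring)]
      _ = _ := by rw [etac_zero]; ring
  · rw [Fintype.sum_prod_type]
    have hinner : ∀ u : ZMod k,
        (∑ x : ZMod k, ω u (u + (s - r)) * etac k (x * (u - r)))
        = if u = r then (k : ℂ) * ω u (u + (s - r)) else 0 := by
      intro u
      rw [← Finset.mul_sum, sum_etac]
      by_cases h1 : u = r <;> simp [h1, sub_eq_zero] <;> ring
    rw [Finset.sum_congr rfl fun u _ => hinner u,
      Finset.sum_ite_eq' univ r (fun u => (k : ℂ) * ω u (u + (s - r))), if_pos (mem_univ _),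
      show r + (s - r) = s by ring]


variable {k}

lemma psd_diag (κ : ZMod k → ZMod k → ℂ) (hpsd : (Matrix.of κ).PosSemidef) (r : ZMod k) :
    0 ≤ κ r r := by
  have h := hpsd.dotProduct_mulVec_nonneg (Pi.single r 1)
  simpa [dotProduct, Matrix.mulVec, Pi.single_apply, Finset.sum_ite_eq] using h

lemma psd_offdiag (κ : ZMod k → ZMod k → ℂ) (hpsd : (Matrix.of κ).PosSemidef) (r s : ZMod k) :
    ‖κ r s‖ ≤ ((κ r r).re + (κ s s).re) / 2 := by
  have hdr := psd_diag κ hpsd r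
  have hds := psd_diag κ hpsd s
  have hdr' : 0 ≤ (κ r r).re := by
    rw [Complex.le_def] at hdr; exact hdr.1
  have hds' : 0 ≤ (κ s s).re := by
    rw [Complex.le_def] at hds; exact hds.1
  by_cases hz : κ r s = 0
  · rw [hz]; simp; linarith
  · set z : ℂ := -(κ r s) / ‖κ r s‖ with hzdef
    have habs : ‖κ r s‖ ≠ 0 := norm_ne_zero_iff.mpr hz
    have h := hpsd.dotProduct_mulVec_nonneg (Pi.single r z + Pi.single s 1)
    -- compute the quadratic form
    have hherm : κ s r = starRingEnd ℂ (κ r s) := by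
      have := hpsd.1
      have h2 := congrFun (congrFun this.symm s) r
      simpa [Matrix.conjTranspose_apply, Matrix.of_apply] using h2
    have hQ : dotProduct (star (Pi.single r z + Pi.single s 1))
        ((Matrix.of κ).mulVec (Pi.single r z + Pi.single s 1))
        = (starRingEnd ℂ) z * z * κ r r + (starRingEnd ℂ) z * (κ r s)
            + z * (κ s r) + κ s s := by
      simp only [dotProduct, Matrix.mulVec, Matrix.of_apply, Pi.add_apply,
        Pi.star_apply, Pi.single_apply, star_add, mul_add, add_mul,
        Finset.sum_add_distrib, mul_ite, ite_mul, mul_zero, zero_mul, mul_one, star_one,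
        Complex.star_def, apply_ite (starRingEnd ℂ), map_zero, map_one, neg_zero, star_zero, star_neg, star_mul', Finset.sum_ite_eq, Finset.sum_ite_eq',
        Finset.mem_univ, if_true]
      ring
    have habsz : ‖z‖ = 1 := by
      rw [hzdef, norm_div, norm_neg, Complex.norm_real, Real.norm_eq_abs,
        abs_of_nonneg (norm_nonneg _), div_self habs]
    have hzz : (starRingEnd ℂ) z * z = 1 := by
      rw [← Complex.normSq_eq_conj_mul_self, Complex.normSq_eq_norm_sq, habsz]
      norm_num
    have hmc : (starRingEnd ℂ) (κ r s) * κ r s = ((‖κ r s‖ ^ 2 : ℝ) : ℂ) := by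
      rw [← Complex.normSq_eq_conj_mul_self, Complex.normSq_eq_norm_sq]
    have hcz : (starRingEnd ℂ) z * κ r s = -((‖κ r s‖ : ℝ) : ℂ) := by
      rw [hzdef, map_div₀, map_neg, Complex.conj_ofReal]
      rw [div_mul_eq_mul_div, neg_mul, hmc]
      push_cast
      rw [neg_div]
      congr 1
      rw [pow_two, mul_div_assoc, div_self (by exact_mod_cast habs), mul_one]
    have hzc : z * κ s r = -((‖κ r s‖ : ℝ) : ℂ) := by
      rw [hherm, hzdef]
      rw [div_mul_eq_mul_div, neg_mul]
      rw [show κ r s * (starRingEnd ℂ) (κ r s) = (starRingEnd ℂ) (κ r s) * κ r s by ring, hmc]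
      push_cast
      rw [neg_div]
      congr 1
      rw [pow_two, mul_div_assoc, div_self (by exact_mod_cast habs), mul_one]
    rw [hQ, hzz, hcz, hzc, one_mul] at h
    rw [Complex.le_def] at h
    have hre := h.1
    simp [Complex.add_re, Complex.sub_re, Complex.neg_re, Complex.ofReal_re,
      Complex.zero_re] at hre
    linarith


lemma alpha_real (α : ZMod k → ZMod k → ℂ) (hpos : ∀ i j : ZMod k, 0 ≤ α i j)
    (i j : ZMod k) : α i j = (((α i j).re : ℝ) : ℂ) := by
  have h := hpos i j
  rw [Complex.le_def] at h
  exact Complex.ext (by simp) (by simp [← h.2])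

lemma Ftr_deviation (α : ZMod k → ZMod k → ℂ) (hpos : ∀ i j : ZMod k, 0 ≤ α i j)
    (x y : ZMod k) :
    ‖Ftr k α x y - (((α 0 0).re : ℝ) : ℂ)‖
      ≤ (∑ i : ZMod k, ∑ j : ZMod k, (α i j).re) - (α 0 0).re := by
  have hmem : ((0 : ZMod k), (0 : ZMod k)) ∈ (Finset.univ : Finset (ZMod k × ZMod k)) :=
    mem_univ _
  have hre : ∀ i j : ZMod k, 0 ≤ (α i j).re := by
    intro i j
    have h := hpos i j
    rw [Complex.le_def] at h
    exact h.1
  have hsplitF : Ftr k α x y = etac k (x * 0 + y * 0) * α 0 0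
      + ∑ q ∈ (Finset.univ : Finset (ZMod k × ZMod k)).erase (0, 0),
          etac k (x * q.1 + y * q.2) * α q.1 q.2 := by
    rw [Ftr_flat]
    exact (Finset.add_sum_erase _ (fun q : ZMod k × ZMod k =>
      etac k (x * q.1 + y * q.2) * α q.1 q.2) hmem).symm
  have hterm00 : etac k (x * 0 + y * 0) * α 0 0 = (((α 0 0).re : ℝ) : ℂ) := by
    rw [show x * 0 + y * 0 = (0 : ZMod k) by ring, etac_zero, one_mul]
    exact alpha_real α hpos 0 0
  have hsplitA : (∑ i : ZMod k, ∑ j : ZMod k, (α i j).re)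
      = (α 0 0).re + ∑ q ∈ (Finset.univ : Finset (ZMod k × ZMod k)).erase (0, 0),
          (α q.1 q.2).re := by
    rw [← Fintype.sum_prod_type (f := fun q : ZMod k × ZMod k => (α q.1 q.2).re)]
    exact (Finset.add_sum_erase _ (fun q : ZMod k × ZMod k => (α q.1 q.2).re) hmem).symm
  rw [hsplitF, hterm00, add_sub_cancel_left, hsplitA, add_sub_cancel_left]
  calc ‖∑ q ∈ (Finset.univ : Finset (ZMod k × ZMod k)).erase (0, 0),
          etac k (x * q.1 + y * q.2) * α q.1 q.2‖
      ≤ ∑ q ∈ (Finset.univ : Finset (ZMod k × ZMod k)).erase (0, 0),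
          ‖etac k (x * q.1 + y * q.2) * α q.1 q.2‖ :=
        norm_sum_le _ _
    _ = ∑ q ∈ (Finset.univ : Finset (ZMod k × ZMod k)).erase (0, 0), (α q.1 q.2).re := by
        refine Finset.sum_congr rfl fun q _ => ?_
        rw [norm_mul, abs_etac, one_mul]
        conv_lhs => rw [alpha_real α hpos q.1 q.2]
        rw [Complex.norm_real, Real.norm_eq_abs, abs_of_nonneg (hre q.1 q.2)]
    _ ≤ _ := le_refl _

lemma Gtr_bound (κ : ZMod k → ZMod k → ℂ) (hpsd : (Matrix.of κ).PosSemidef) (t x : ZMod k) :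
    ‖Gtr k κ t x‖ ≤ ∑ r : ZMod k, (κ r r).re := by
  have hshift : ∑ r : ZMod k, (κ (r + t) (r + t)).re = ∑ r : ZMod k, (κ r r).re :=
    Equiv.sum_comp (Equiv.addRight t) (fun u => (κ u u).re)
  calc ‖Gtr k κ t x‖
      ≤ ∑ r : ZMod k, ‖etac k (x * r) * κ r (r + t)‖ :=
        norm_sum_le _ _
    _ ≤ ∑ r : ZMod k, ((κ r r).re + (κ (r + t) (r + t)).re) / 2 := by
        refine Finset.sum_le_sum fun r _ => ?_
        rw [norm_mul, abs_etac, one_mul]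
        exact psd_offdiag κ hpsd r (r + t)
    _ = ∑ r : ZMod k, (κ r r).re := by
        rw [show (∑ r : ZMod k, ((κ r r).re + (κ (r + t) (r + t)).re) / 2)
          = ((∑ r : ZMod k, (κ r r).re) + ∑ r : ZMod k, (κ (r + t) (r + t)).re) / 2 by
            rw [← Finset.sum_add_distrib, ← Finset.sum_div], hshift]
        ring

end SekineAux

theorem stmt15 (k : ℕ) [NeZero k] (hk : 2 ≤ k) (α κ : ZMod k → ZMod k → ℂ)
    (hpos : ∀ i j : ZMod k, 0 ≤ α i j)
    (hpsd : (Matrix.of κ).PosSemidef)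
    (hnorm : (∑ i : ZMod k, ∑ j : ZMod k, α i j) + ∑ r : ZMod k, κ r r = 1)
    (h00 : 0 < α 0 0) :
    ∃ A B : ZMod k → ZMod k → ℂ,
      (∀ i j : ZMod k, Filter.Tendsto (fun n => (convIter k α κ n).1 i j)
        Filter.atTop (nhds (A i j))) ∧
      (∀ r s : ZMod k, Filter.Tendsto (fun n => (convIter k α κ n).2 r s)
        Filter.atTop (nhds (B r s))) := by
  classical
  open SekineAux in
  have hk0 : (k : ℂ) ≠ 0 := Nat.cast_ne_zero.mpr (NeZero.ne k)
  set δ : ℝ := (α 0 0).re with hδdef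
  set A : ℝ := ∑ i : ZMod k, ∑ j : ZMod k, (α i j).re with hAdef
  set Kc : ℝ := ∑ r : ZMod k, (κ r r).re with hKdef
  have hδ : 0 < δ := by
    rw [Complex.lt_def] at h00
    simpa using h00.1
  have hAK : A + Kc = 1 := by
    have h := congrArg Complex.re hnorm
    simp only [Complex.add_re, Complex.re_sum, Complex.one_re] at h
    rw [hAdef, hKdef]
    exact h
  have key : ∀ x y : ZMod k,
      (∃ P, Filter.Tendsto (fun n => Ftr k ((convIter k α κ n).1) x y)
        Filter.atTop (nhds P)) ∧
      (∃ Q, Filter.Tendsto (fun n => Gtr k ((convIter k α κ n).2) x y)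
        Filter.atTop (nhds Q)) := by
    intro x y
    refine SekineAux.key2 (Ftr k α x y) (Gtr k κ x (-y)) (Gtr k κ x y) (Ftr k α x (-y))
      A Kc δ hδ (SekineAux.Ftr_deviation α hpos x y) (SekineAux.Ftr_deviation α hpos x (-y))
      (SekineAux.Gtr_bound κ hpsd x (-y)) (SekineAux.Gtr_bound κ hpsd x y) (le_of_eq hAK)
      _ _ (fun n => ?_) (fun n => ?_)
    · exact SekineAux.FT_convA k α κ ((convIter k α κ n).1) ((convIter k α κ n).2) x y
    · rw [show ((convIter k α κ (n + 1)).2) = convK k α κ ((convIter k α κ n).1)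
        ((convIter k α κ n).2) from rfl,
        SekineAux.FT_convK k α κ ((convIter k α κ n).1) ((convIter k α κ n).2) x y]
      ring
  have hPL : ∀ x y : ZMod k, ∃ L, Filter.Tendsto
      (fun n => Ftr k ((convIter k α κ n).1) x y) Filter.atTop (nhds L) :=
    fun x y => (key x y).1
  have hQL : ∀ x y : ZMod k, ∃ L, Filter.Tendsto
      (fun n => Gtr k ((convIter k α κ n).2) x y) Filter.atTop (nhds L) :=
    fun x y => (key x y).2
  choose PL hP using hPL
  choose QL hQ using hQL
  refine ⟨fun i j => 1 / (k : ℂ) ^ 2 * ∑ x : ZMod k, ∑ y : ZMod k,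
      etac k (-(x * i) + -(y * j)) * PL x y,
    fun r s => 1 / (k : ℂ) * ∑ x : ZMod k, etac k (-(x * r)) * QL (s - r) x, ?_, ?_⟩
  · intro i j
    have hrep : ∀ n, (convIter k α κ n).1 i j
        = 1 / (k : ℂ) ^ 2 * ∑ x : ZMod k, ∑ y : ZMod k,
            etac k (-(x * i) + -(y * j)) * Ftr k ((convIter k α κ n).1) x y := by
      intro n
      rw [SekineAux.inv_F k ((convIter k α κ n).1) i j]
      field_simp
    have ht : Filter.Tendsto (fun n => 1 / (k : ℂ) ^ 2 * ∑ x : ZMod k, ∑ y : ZMod k,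
        etac k (-(x * i) + -(y * j)) * Ftr k ((convIter k α κ n).1) x y)
        Filter.atTop (nhds (1 / (k : ℂ) ^ 2 * ∑ x : ZMod k, ∑ y : ZMod k,
          etac k (-(x * i) + -(y * j)) * PL x y)) := by
      refine Filter.Tendsto.const_mul _ ?_
      refine tendsto_finset_sum _ fun x _ => ?_
      refine tendsto_finset_sum _ fun y _ => ?_
      exact (hP x y).const_mul _
    exact ht.congr fun n => (hrep n).symm
  · intro r s
    have hrep : ∀ n, (convIter k α κ n).2 r s
        = 1 / (k : ℂ) * ∑ x : ZMod k,
            etac k (-(x * r)) * Gtr k ((convIter k α κ n).2) (s - r) x := by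
      intro n
      rw [SekineAux.inv_G k ((convIter k α κ n).2) r s]
      field_simp
    have ht : Filter.Tendsto (fun n => 1 / (k : ℂ) * ∑ x : ZMod k,
        etac k (-(x * r)) * Gtr k ((convIter k α κ n).2) (s - r) x)
        Filter.atTop (nhds (1 / (k : ℂ) * ∑ x : ZMod k,
          etac k (-(x * r)) * QL (s - r) x)) := by
      refine Filter.Tendsto.const_mul _ ?_
      refine tendsto_finset_sum _ fun x _ => ?_
      exact (hQ (s - r) x).const_mul _
    exact ht.congr fun n => (hrep n).symm
end
end
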